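/- arXiv:0911.5629 — 3 statements merged into one kernel-verified Lean document; each statement's English description precedes it below -/
import Mathlib

section
/- Let p ∈ (0,1), q = 1 − p, and let θ = a/b with a ∈ ℤ, b ∈ ℕ, b ≥ 1 and |a| ≤ b. Let P be a probability measure on the space of dynamic environments ξ : ℕ × ℤ → {0,1} (with the product σ-algebra) such that the space-time shift T defined by (Tξ)(k, y) = ξ(k + 2b, y + 2a) is measure-preserving and ergodic for P. Then there exists a constant I ∈ [0, log(1/min(p,q))] such that for P-almost every ξ, lim_{k→∞} −(1/(2bk)) · log q_{2bk}^0(ξ, 2ak) = I. -/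
open Finset MeasureTheory Filter

/-- Position after `k` steps of the nearest-neighbor path started at `x`
with up/down steps given by `s`. -/
def pathPos (x : ℤ) {n : ℕ} (s : Fin n → Bool) (k : ℕ) : ℤ :=
  x + ∑ i ∈ Finset.univ.filter (fun i : Fin n => (i : ℕ) < k), (if s i then (1 : ℤ) else -1)

/-- The quenched `n`-step transition probability `q_n^x(ξ, m)` of the random walk in the
dynamic environment `ξ : ℕ × ℤ → {0,1}` started at `x`. -/
noncomputable def quenchedProb (p : ℝ) (ξ : ℕ → ℤ → Bool) (n : ℕ) (x m : ℤ) : ℝ :=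
  ∑ s ∈ Finset.univ.filter (fun s : Fin n → Bool => pathPos x s n = m),
    ∏ k : Fin n, (if ξ k (pathPos x s k) = s k then p else 1 - p)

lemma pathPos_eq_sum (x : ℤ) {n : ℕ} (s : Fin n → Bool) (k : ℕ) :
    pathPos x s k = x + ∑ i : Fin n, if (i : ℕ) < k then (if s i then (1:ℤ) else -1) else 0 := by
  rw [pathPos, Finset.sum_filter]

lemma pathPos_zero (x : ℤ) {n : ℕ} (s : Fin n → Bool) : pathPos x s 0 = x := by
  simp [pathPos]

lemma pathPos_cons (x : ℤ) {n : ℕ} (c : Bool) (s : Fin n → Bool) (k : ℕ) :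
    pathPos x (Fin.cons c s) (k + 1) = pathPos (x + (if c then (1:ℤ) else -1)) s k := by
  rw [pathPos_eq_sum, pathPos_eq_sum, Fin.sum_univ_succ]
  simp only [Fin.cons_zero, Fin.cons_succ, Fin.val_zero, Fin.val_succ,
    Nat.zero_lt_succ, if_true, Nat.add_lt_add_iff_right]
  ring

lemma pathPos_full (x : ℤ) {n : ℕ} (s : Fin n → Bool) :
    pathPos x s n = x + ∑ i : Fin n, (if s i then (1:ℤ) else -1) := by
  rw [pathPos]
  congr 1
  apply Finset.sum_congr _ (fun _ _ => rfl)
  exact Finset.filter_true_of_mem (fun i _ => i.isLt)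

/-- normalization: total weight over all paths is 1 -/
lemma weight_sum_eq_one (p : ℝ) :
    ∀ (n : ℕ) (ξ : ℕ → ℤ → Bool) (x : ℤ),
    ∑ s : Fin n → Bool, ∏ k : Fin n,
      (if ξ k (pathPos x s k) = s k then p else 1 - p) = 1 := by
  intro n
  induction n with
  | zero => intro ξ x; simp
  | succ n ih =>
    intro ξ x
    rw [← Equiv.sum_comp (Fin.consEquiv (fun _ : Fin (n+1) => Bool))]
    rw [Fintype.sum_prod_type]
    have : ∀ (c : Bool) (s : Fin n → Bool),
        (∏ k : Fin (n+1), (if ξ k (pathPos x ((Fin.consEquiv fun _ => Bool) (c, s)) k)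
            = (Fin.consEquiv (fun _ => Bool)) (c, s) k then p else 1 - p))
        = (if ξ 0 x = c then p else 1 - p) *
          ∏ k : Fin n, (if (fun j => ξ (j+1)) k (pathPos (x + (if c then (1:ℤ) else -1)) s k)
              = s k then p else 1 - p) := by
      intro c s
      rw [Fin.prod_univ_succ]
      congr 1
      · simp [Fin.consEquiv, pathPos_zero]
      · apply Finset.prod_congr rfl
        intro k _
        have h1 : ((Fin.consEquiv fun _ => Bool) (c, s) : Fin (n+1) → Bool) = Fin.cons c s := rfl
        rw [h1]
        have h2 : ((k.succ : Fin (n+1)) : ℕ) = (k : ℕ) + 1 := rfl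
        rw [h2, pathPos_cons, Fin.cons_succ]
    simp_rw [this]
    rw [Fintype.sum_bool, ← Finset.mul_sum, ← Finset.mul_sum]
    have e1 := ih (fun j => ξ (j+1)) (x + 1)
    have e2 := ih (fun j => ξ (j+1)) (x + -1)
    simp only [reduceIte, Bool.false_eq_true, if_false] at e1 e2 ⊢
    rw [e1, e2]
    cases h : ξ 0 x <;> simp

lemma weight_nonneg {p : ℝ} (hp0 : 0 ≤ p) (hp1 : p ≤ 1) (ξ : ℕ → ℤ → Bool) {n : ℕ}
    (x : ℤ) (s : Fin n → Bool) :
    0 ≤ ∏ k : Fin n, (if ξ k (pathPos x s k) = s k then p else 1 - p) :=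
  Finset.prod_nonneg (fun k _ => by split <;> linarith)

lemma quenchedProb_nonneg {p : ℝ} (hp0 : 0 ≤ p) (hp1 : p ≤ 1) (ξ : ℕ → ℤ → Bool)
    (n : ℕ) (x m : ℤ) : 0 ≤ quenchedProb p ξ n x m :=
  Finset.sum_nonneg (fun s _ => weight_nonneg hp0 hp1 ξ x s)

lemma quenchedProb_le_one {p : ℝ} (hp0 : 0 ≤ p) (hp1 : p ≤ 1) (ξ : ℕ → ℤ → Bool)
    (n : ℕ) (x m : ℤ) : quenchedProb p ξ n x m ≤ 1 := by
  rw [quenchedProb]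
  calc ∑ s ∈ Finset.univ.filter (fun s : Fin n → Bool => pathPos x s n = m),
        ∏ k : Fin n, (if ξ k (pathPos x s k) = s k then p else 1 - p)
      ≤ ∑ s : Fin n → Bool, ∏ k : Fin n, (if ξ k (pathPos x s k) = s k then p else 1 - p) :=
        Finset.sum_le_sum_of_subset_of_nonneg (Finset.filter_subset _ _)
          (fun s _ _ => weight_nonneg hp0 hp1 ξ x s)
    _ = 1 := weight_sum_eq_one p n ξ x

/-- there is a path of length n from 0 to 2u - n, provided u ≤ n -/
lemma exists_path_endpoint (n u : ℕ) (hu : u ≤ n) :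
    pathPos 0 (fun i : Fin n => decide ((i : ℕ) < u)) n = 2 * (u : ℤ) - n := by
  rw [pathPos_full]
  simp only [decide_eq_true_eq]
  have hr := Fin.sum_univ_eq_sum_range (fun j => if j < u then (1:ℤ) else -1) n
  rw [hr]
  rw [Finset.range_eq_Ico, ← Finset.sum_Ico_consecutive _ (Nat.zero_le u) hu]
  rw [Finset.sum_ite_of_true, Finset.sum_ite_of_false]
  · simp [Finset.sum_const, Nat.card_Ico]
    push_cast [Nat.cast_sub hu]
    ring
  · intro i hi; simp at hi; omega
  · intro i hi; simp at hi; omega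

lemma quenchedProb_lower {p : ℝ} (hp0 : 0 < p) (hp1 : p < 1) (ξ : ℕ → ℤ → Bool)
    (n u : ℕ) (hu : u ≤ n) :
    min p (1 - p) ^ n ≤ quenchedProb p ξ n 0 (2 * (u : ℤ) - n) := by
  set s0 : Fin n → Bool := fun i => decide ((i : ℕ) < u) with hs0
  have hmem : s0 ∈ Finset.univ.filter (fun s : Fin n → Bool => pathPos 0 s n = 2 * (u:ℤ) - n) := by
    simp only [Finset.mem_filter, Finset.mem_univ, true_and]
    exact exists_path_endpoint n u hu
  have hterm : min p (1 - p) ^ n ≤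
      ∏ k : Fin n, (if ξ k (pathPos 0 s0 k) = s0 k then p else 1 - p) := by
    have : min p (1 - p) ^ n = ∏ _k : Fin n, min p (1 - p) := by
      rw [Finset.prod_const, Finset.card_univ, Fintype.card_fin]
    rw [this]
    apply Finset.prod_le_prod (fun k _ => le_min hp0.le (by linarith))
    intro k _
    split
    · exact min_le_left _ _
    · exact min_le_right _ _
  refine le_trans hterm ?_
  exact Finset.single_le_sum (fun s _ => weight_nonneg hp0.le hp1.le ξ 0 s) hmem

lemma pathPos_translate (x : ℤ) {n : ℕ} (s : Fin n → Bool) (k : ℕ) :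
    pathPos x s k = pathPos 0 s k + x := by
  simp [pathPos]; ring

/-- space shift -/
lemma quenchedProb_shift_space (p : ℝ) (ξ : ℕ → ℤ → Bool) (n : ℕ) (x m : ℤ) :
    quenchedProb p ξ n x m = quenchedProb p (fun k w => ξ k (w + x)) n 0 (m - x) := by
  have hfe : (Finset.univ.filter (fun s : Fin n → Bool => pathPos x s n = m))
      = (Finset.univ.filter (fun s : Fin n → Bool => pathPos 0 s n = m - x)) := by
    apply Finset.filter_congr
    intro s _
    rw [pathPos_translate]
    constructor <;> intro h <;> omega
  rw [quenchedProb, quenchedProb, hfe]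
  apply Finset.sum_congr rfl
  intro s _
  apply Finset.prod_congr rfl
  intro k _
  rw [pathPos_translate x s k]

lemma pathPos_append_left (x : ℤ) {n m : ℕ} (s₁ : Fin n → Bool) (s₂ : Fin m → Bool)
    {k : ℕ} (hk : k ≤ n) :
    pathPos x (Fin.append s₁ s₂) k = pathPos x s₁ k := by
  rw [pathPos_eq_sum, pathPos_eq_sum, Fin.sum_univ_add]
  have h2 : ∀ j : Fin m, (if ((Fin.natAdd n j : Fin (n+m)) : ℕ) < k then
      (if Fin.append s₁ s₂ (Fin.natAdd n j) then (1:ℤ) else -1) else 0) = 0 := by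
    intro j
    rw [if_neg]
    simp only [Fin.coe_natAdd]
    omega
  rw [Finset.sum_congr rfl (fun j _ => h2 j), Finset.sum_const, smul_zero, add_zero]
  congr 1
  apply Finset.sum_congr rfl
  intro i _
  rw [Fin.append_left]
  rfl

lemma pathPos_append_right (x : ℤ) {n m : ℕ} (s₁ : Fin n → Bool) (s₂ : Fin m → Bool)
    (j : ℕ) :
    pathPos x (Fin.append s₁ s₂) (n + j) = pathPos (pathPos x s₁ n) s₂ j := by
  rw [pathPos_eq_sum, Fin.sum_univ_add, pathPos_eq_sum, pathPos_full]
  have h1 : ∀ i : Fin n, (if ((Fin.castAdd m i : Fin (n+m)) : ℕ) < n + j then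
      (if Fin.append s₁ s₂ (Fin.castAdd m i) then (1:ℤ) else -1) else 0)
      = (if s₁ i then (1:ℤ) else -1) := by
    intro i
    rw [Fin.append_left, if_pos]
    simp only [Fin.coe_castAdd]
    omega
  have h2 : ∀ jj : Fin m, (if ((Fin.natAdd n jj : Fin (n+m)) : ℕ) < n + j then
      (if Fin.append s₁ s₂ (Fin.natAdd n jj) then (1:ℤ) else -1) else 0)
      = (if (jj : ℕ) < j then (if s₂ jj then (1:ℤ) else -1) else 0) := by
    intro jj
    rw [Fin.append_right]
    simp only [Fin.coe_natAdd]
    by_cases h : (jj : ℕ) < j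
    · rw [if_pos (by omega), if_pos h]
    · rw [if_neg (by omega), if_neg h]
  rw [Finset.sum_congr rfl (fun i _ => h1 i), Finset.sum_congr rfl (fun jj _ => h2 jj)]
  ring

lemma quenchedProb_concat {p : ℝ} (hp0 : 0 ≤ p) (hp1 : p ≤ 1) (ξ : ℕ → ℤ → Bool)
    (n m : ℕ) (x y z : ℤ) :
    quenchedProb p ξ n x y * quenchedProb p (fun k w => ξ (n + k) w) m y z
      ≤ quenchedProb p ξ (n + m) x z := by
  classical
  set F₁ := Finset.univ.filter (fun s : Fin n → Bool => pathPos x s n = y) with hF₁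
  set F₂ := Finset.univ.filter (fun s : Fin m → Bool => pathPos y s m = z) with hF₂
  set F := Finset.univ.filter (fun s : Fin (n+m) → Bool => pathPos x s (n+m) = z) with hF
  set W : (Fin (n+m) → Bool) → ℝ :=
    fun s => ∏ k : Fin (n+m), (if ξ k (pathPos x s k) = s k then p else 1 - p) with hW
  have key : ∀ s₁ ∈ F₁, ∀ s₂ ∈ F₂,
      W (Fin.append s₁ s₂)
        = (∏ k : Fin n, (if ξ k (pathPos x s₁ k) = s₁ k then p else 1 - p))
          * (∏ k : Fin m, (if (fun k w => ξ (n + k) w) k (pathPos y s₂ k) = s₂ k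
              then p else 1 - p)) := by
    intro s₁ hs₁ s₂ hs₂
    have hy : pathPos x s₁ n = y := by simpa [hF₁] using hs₁
    rw [hW]
    simp only []
    rw [Fin.prod_univ_add]
    congr 1
    · apply Finset.prod_congr rfl
      intro i _
      rw [Fin.append_left]
      have : ((Fin.castAdd m i : Fin (n+m)) : ℕ) = (i : ℕ) := rfl
      rw [this, pathPos_append_left x s₁ s₂ (le_of_lt i.isLt)]
    · apply Finset.prod_congr rfl
      intro j _
      rw [Fin.append_right]
      have hc : ((Fin.natAdd n j : Fin (n+m)) : ℕ) = n + (j : ℕ) := rfl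
      rw [hc, pathPos_append_right x s₁ s₂ j, hy]
  have hmem : ∀ s₁ ∈ F₁, ∀ s₂ ∈ F₂, Fin.append s₁ s₂ ∈ F := by
    intro s₁ hs₁ s₂ hs₂
    have hy : pathPos x s₁ n = y := by simpa [hF₁] using hs₁
    have hz : pathPos y s₂ m = z := by simpa [hF₂] using hs₂
    simp only [hF, Finset.mem_filter, Finset.mem_univ, true_and]
    rw [pathPos_append_right x s₁ s₂ m, hy, hz]
  -- sum over image
  have hinj : Set.InjOn (fun q : (Fin n → Bool) × (Fin m → Bool) => Fin.append q.1 q.2)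
      (F₁ ×ˢ F₂ : Finset _) := by
    rintro ⟨s₁, s₂⟩ _ ⟨t₁, t₂⟩ _ h
    simp only [Prod.mk.injEq]
    constructor
    · funext i
      have := congrFun h (Fin.castAdd m i)
      simp only [] at this
      rwa [Fin.append_left, Fin.append_left] at this
    · funext j
      have := congrFun h (Fin.natAdd n j)
      simp only [] at this
      rwa [Fin.append_right, Fin.append_right] at this
  calc quenchedProb p ξ n x y * quenchedProb p (fun k w => ξ (n + k) w) m y z
      = ∑ q ∈ F₁ ×ˢ F₂, W (Fin.append q.1 q.2) := by
        rw [quenchedProb, quenchedProb, Finset.sum_mul_sum, ← hF₁, ← hF₂,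
          Finset.sum_product]
        apply Finset.sum_congr rfl
        intro s₁ hs₁
        apply Finset.sum_congr rfl
        intro s₂ hs₂
        exact (key s₁ hs₁ s₂ hs₂).symm
    _ = ∑ S ∈ (F₁ ×ˢ F₂).image (fun q : (Fin n → Bool) × (Fin m → Bool) =>
          Fin.append q.1 q.2), W S := by
        rw [Finset.sum_image (fun q hq q' hq' h => hinj hq hq' h)]
    _ ≤ ∑ S ∈ F, W S := by
        apply Finset.sum_le_sum_of_subset_of_nonneg
        · intro S hS
          simp only [Finset.mem_image] at hS
          obtain ⟨⟨s₁, s₂⟩, hq, rfl⟩ := hS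
          rw [Finset.mem_product] at hq
          exact hmem s₁ hq.1 s₂ hq.2
        · intro S _ _
          exact weight_nonneg hp0 hp1 ξ x S
    _ = quenchedProb p ξ (n + m) x z := rfl

lemma quenchedProb_zero (p : ℝ) (ξ : ℕ → ℤ → Bool) (x : ℤ) :
    quenchedProb p ξ 0 x x = 1 := by
  rw [quenchedProb]
  rw [Finset.filter_true_of_mem (fun s _ => by rw [pathPos_zero])]
  simp

lemma measurable_quenchedProb (p : ℝ) (n : ℕ) (x m : ℤ) :
    Measurable (fun ξ : ℕ → ℤ → Bool => quenchedProb p ξ n x m) := by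
  unfold quenchedProb
  apply Finset.measurable_sum
  intro s _
  apply Finset.measurable_prod
  intro k _
  have h1 : Measurable (fun ξ : ℕ → ℤ → Bool => ξ k (pathPos x s k)) :=
    (measurable_pi_apply (pathPos x s k)).comp (measurable_pi_apply (k : ℕ))
  exact (measurable_from_top (f := fun v : Bool => if v = s k then p else 1 - p)).comp h1



lemma limsup_le_limsup_perturb {c e d : ℕ → ℝ} {A B : ℝ}
    (hcB : ∀ n, B ≤ c n) (heA : ∀ n, e n ≤ A)
    (h : ∀ᶠ n in atTop, c n ≤ e n + d n) (hd : Tendsto d atTop (nhds 0)) :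
    limsup c atTop ≤ limsup e atTop := by
  have hcb : IsCoboundedUnder (· ≤ ·) atTop c :=
    isCoboundedUnder_le_of_le atTop (x := B) (fun n => hcB n)
  have heb : IsBoundedUnder (· ≤ ·) atTop e := isBoundedUnder_of ⟨A, heA⟩
  refine le_of_forall_pos_le_add (fun ε hε => ?_)
  have h1 : ∀ᶠ n in atTop, e n < limsup e atTop + ε / 2 := by
    refine eventually_lt_of_limsup_lt ?_ heb
    linarith
  have h2 : ∀ᶠ n in atTop, d n < ε / 2 :=
    hd.eventually (eventually_lt_nhds (by linarith : (0:ℝ) < ε / 2))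
  refine limsup_le_of_le hcb ?_
  filter_upwards [h, h1, h2] with n hn h1n h2n
  linarith

lemma liminf_le_liminf_perturb {c e d : ℕ → ℝ} {A B : ℝ}
    (hcB : ∀ n, B ≤ c n) (heA : ∀ n, e n ≤ A)
    (h : ∀ᶠ n in atTop, c n ≤ e n + d n) (hd : Tendsto d atTop (nhds 0)) :
    liminf c atTop ≤ liminf e atTop := by
  have heb : IsCoboundedUnder (· ≥ ·) atTop e :=
    isCoboundedUnder_ge_of_le atTop (x := A) (fun n => heA n)
  have hcb : IsBoundedUnder (· ≥ ·) atTop c := isBoundedUnder_of ⟨B, hcB⟩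
  refine le_of_forall_pos_le_add (fun ε hε => ?_)
  have h1 : ∃ᶠ n in atTop, e n < liminf e atTop + ε / 2 := by
    refine frequently_lt_of_liminf_lt heb ?_
    linarith
  have h2 : ∀ᶠ n in atTop, d n < ε / 2 :=
    hd.eventually (eventually_lt_nhds (by linarith : (0:ℝ) < ε / 2))
  refine liminf_le_of_frequently_le ?_ hcb
  refine ((h1.and_eventually (h.and h2)).mono ?_)
  rintro n ⟨h1n, hn, h2n⟩
  linarith

section PureBirk
variable {α : Type*}

def birkS (T : α → α) (u : α → ℝ) (n : ℕ) (x : α) : ℝ := ∑ i ∈ Finset.range n, u (T^[i] x)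

def birkM (T : α → α) (u : α → ℝ) : ℕ → α → ℝ
  | 0, _ => 0
  | n+1, x => max (birkM T u n x) (birkS T u (n+1) x)

lemma birkS_zero (T : α → α) (u : α → ℝ) (x : α) : birkS T u 0 x = 0 := by simp [birkS]

lemma birkS_succ (T : α → α) (u : α → ℝ) (n : ℕ) (x : α) :
    birkS T u (n+1) x = u x + birkS T u n (T x) := by
  rw [birkS, Finset.sum_range_succ']
  simp only [Function.iterate_succ_apply, Function.iterate_zero_apply]
  rw [birkS, add_comm]

lemma birkM_nonneg (T : α → α) (u : α → ℝ) (n : ℕ) (x : α) : 0 ≤ birkM T u n x := by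
  induction n with
  | zero => exact le_refl _
  | succ n ih => exact le_trans ih (le_max_left _ _)

lemma birkM_mono (T : α → α) (u : α → ℝ) (n : ℕ) (x : α) :
    birkM T u n x ≤ birkM T u (n+1) x := le_max_left _ _

lemma birkS_le_birkM (T : α → α) (u : α → ℝ) {k n : ℕ} (h : k ≤ n) (x : α) :
    birkS T u k x ≤ birkM T u n x := by
  induction n with
  | zero =>
    have : k = 0 := Nat.le_zero.mp h
    rw [this, birkS_zero]
    exact birkM_nonneg T u 0 x
  | succ n ih =>
    rcases Nat.lt_or_ge k (n+1) with h' | h'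
    · exact le_trans (ih (Nat.lt_succ_iff.mp h')) (le_max_left _ _)
    · have : k = n + 1 := le_antisymm h h'
      rw [this]
      exact le_max_right _ _

lemma birkM_exists (T : α → α) (u : α → ℝ) (n : ℕ) (x : α) (h : 0 < birkM T u n x) :
    ∃ k, 1 ≤ k ∧ k ≤ n ∧ birkM T u n x = birkS T u k x := by
  induction n with
  | zero => exact absurd h (by simp [birkM])
  | succ n ih =>
    rw [birkM] at h ⊢
    rcases le_or_gt (birkS T u (n+1) x) (birkM T u n x) with hle | hlt
    · rw [max_eq_left hle] at h ⊢
      obtain ⟨k, h1, h2, h3⟩ := ih h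
      exact ⟨k, h1, Nat.le_succ_of_le h2, h3⟩
    · rw [max_eq_right hlt.le]
      exact ⟨n+1, by omega, le_refl _, rfl⟩

lemma birkM_key (T : α → α) (u : α → ℝ) (n : ℕ) (x : α) (h : 0 < birkM T u n x) :
    birkM T u n x ≤ u x + birkM T u n (T x) := by
  obtain ⟨k, hk1, hkn, he⟩ := birkM_exists T u n x h
  obtain ⟨k', rfl⟩ := Nat.exists_eq_add_of_le' hk1
  rw [he, birkS_succ]
  have : birkS T u k' (T x) ≤ birkM T u n (T x) := birkS_le_birkM T u (by omega) (T x)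
  linarith

lemma abs_birkS_le (T : α → α) {u : α → ℝ} {Bd : ℝ} (hbd : ∀ x, |u x| ≤ Bd) (n : ℕ) (x : α) :
    |birkS T u n x| ≤ n * Bd := by
  calc |birkS T u n x| ≤ ∑ i ∈ Finset.range n, |u (T^[i] x)| := Finset.abs_sum_le_sum_abs _ _
    _ ≤ ∑ _i ∈ Finset.range n, Bd := Finset.sum_le_sum (fun i _ => hbd _)
    _ = n * Bd := by rw [Finset.sum_const, Finset.card_range, nsmul_eq_mul]

lemma abs_birkM_le (T : α → α) {u : α → ℝ} {Bd : ℝ} (hBd : 0 ≤ Bd) (hbd : ∀ x, |u x| ≤ Bd)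
    (n : ℕ) (x : α) : |birkM T u n x| ≤ n * Bd := by
  induction n with
  | zero => simp [birkM]
  | succ n ih =>
    rw [birkM]
    calc |max (birkM T u n x) (birkS T u (n+1) x)|
        ≤ max |birkM T u n x| |birkS T u (n+1) x| := abs_max_le_max_abs_abs
      _ ≤ (n+1 : ℕ) * Bd := by
          apply max_le
          · calc |birkM T u n x| ≤ n * Bd := ih
              _ ≤ (n+1 : ℕ) * Bd := by
                apply mul_le_mul_of_nonneg_right _ hBd
                push_cast; linarith
          · exact abs_birkS_le T hbd (n+1) x


end PureBirk

variable {α : Type*} [MeasurableSpace α] {μ : Measure α} [IsProbabilityMeasure μ] {T : α → α}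

lemma measurable_birkS (hT : Measurable T) {u : α → ℝ} (hu : Measurable u) (n : ℕ) :
    Measurable (birkS T u n) :=
  Finset.measurable_sum _ (fun i _ => hu.comp (hT.iterate i))

lemma measurable_birkM (hT : Measurable T) {u : α → ℝ} (hu : Measurable u) (n : ℕ) :
    Measurable (birkM T u n) := by
  induction n with
  | zero => exact measurable_const
  | succ n ih => exact ih.max (measurable_birkS hT hu (n+1))




lemma integrable_of_bdd {f : α → ℝ} (hf : Measurable f) {Cb : ℝ} (h : ∀ x, |f x| ≤ Cb) :
    Integrable f μ :=
  ⟨hf.aestronglyMeasurable, HasFiniteIntegral.of_bounded (C := Cb)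
    (ae_of_all _ (fun x => by simpa [Real.norm_eq_abs] using h x))⟩

lemma integral_comp_eq {f : α → ℝ} (hT : MeasurePreserving T μ μ) (hf : Measurable f) :
    ∫ x, f (T x) ∂μ = ∫ x, f x ∂μ := by
  rw [← integral_map hT.measurable.aemeasurable]
  · rw [hT.map_eq]
  · rw [hT.map_eq]; exact hf.aestronglyMeasurable

/-- a bounded measurable function that increases along an ergodic map is a.e. constant -/
lemma ae_const_of_le_comp (hT : Ergodic T μ) {φ : α → ℝ} (hφ : Measurable φ) {A B : ℝ}
    (hbd : ∀ x, B ≤ φ x ∧ φ x ≤ A) (hmono : ∀ x, φ x ≤ φ (T x)) :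
    ∃ c, φ =ᵐ[μ] fun _ => c := by
  have hint : Integrable φ μ := integrable_of_bdd hφ (Cb := max |A| |B|) (fun x => by
    rcases hbd x with ⟨h1, h2⟩
    rw [abs_le]
    constructor
    · calc -(max |A| |B|) ≤ -|B| := by simp [neg_le_neg_iff]
        _ ≤ B := neg_abs_le B
        _ ≤ φ x := h1
    · calc φ x ≤ A := h2
        _ ≤ |A| := le_abs_self A
        _ ≤ max |A| |B| := le_max_left _ _)
  have hintT : Integrable (fun x => φ (T x)) μ := integrable_of_bdd
    (hφ.comp hT.toMeasurePreserving.measurable) (Cb := max |A| |B|) (fun x => by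
      rcases hbd (T x) with ⟨h1, h2⟩
      rw [abs_le]
      refine ⟨?_, ?_⟩
      · calc -(max |A| |B|) ≤ -|B| := by simp [neg_le_neg_iff]
          _ ≤ B := neg_abs_le B
          _ ≤ φ (T x) := h1
      · calc φ (T x) ≤ A := h2
          _ ≤ |A| := le_abs_self A
          _ ≤ max |A| |B| := le_max_left _ _)
  have hzero : ∫ x, (φ (T x) - φ x) ∂μ = 0 := by
    rw [integral_sub hintT hint, integral_comp_eq hT.toMeasurePreserving hφ, sub_self]
  have hae : (fun x => φ (T x) - φ x) =ᵐ[μ] 0 := by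
    rw [← integral_eq_zero_iff_of_nonneg (fun x => sub_nonneg.2 (hmono x)) (hintT.sub hint)]
    exact hzero
  have hcomp : φ ∘ T =ᵐ[μ] φ := by
    filter_upwards [hae] with x hx
    have : φ (T x) - φ x = 0 := hx
    simp only [Function.comp_apply]
    linarith
  exact hT.ae_eq_const_of_ae_eq_comp₀ hφ.nullMeasurable hcomp

/-! ### Birkhoff sums and the maximal ergodic lemma -/

/-- Garsia's maximal ergodic lemma -/
lemma garsia (hT : MeasurePreserving T μ μ) {u : α → ℝ} (hu : Measurable u) {Bd : ℝ}
    (hBd : 0 ≤ Bd) (hbd : ∀ x, |u x| ≤ Bd) (n : ℕ) :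
    0 ≤ ∫ x in {x | 0 < birkM T u n x}, u x ∂μ := by
  set E := {x | 0 < birkM T u n x} with hE
  have hEm : MeasurableSet E := measurableSet_lt measurable_const (measurable_birkM hT.measurable hu n)
  have hMint : Integrable (birkM T u n) μ :=
    integrable_of_bdd (measurable_birkM hT.measurable hu n) (abs_birkM_le T hBd hbd n)
  have hMTint : Integrable (fun x => birkM T u n (T x)) μ :=
    integrable_of_bdd ((measurable_birkM hT.measurable hu n).comp hT.measurable)
      (fun x => abs_birkM_le T hBd hbd n (T x))
  have huint : Integrable u μ := integrable_of_bdd hu hbd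
  have step1 : ∫ x in E, (birkM T u n x - birkM T u n (T x)) ∂μ ≤ ∫ x in E, u x ∂μ := by
    apply setIntegral_mono_on (hMint.sub hMTint).integrableOn huint.integrableOn hEm
    intro x hx
    simp only [Pi.sub_apply]
    have := birkM_key T u n x hx
    linarith
  have step2 : ∫ x in E, (birkM T u n x - birkM T u n (T x)) ∂μ
      = ∫ x in E, birkM T u n x ∂μ - ∫ x in E, birkM T u n (T x) ∂μ :=
    integral_sub hMint.integrableOn hMTint.integrableOn
  have step3 : ∫ x in E, birkM T u n x ∂μ = ∫ x, birkM T u n x ∂μ := by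
    rw [← integral_add_compl hEm hMint]
    have : ∫ x in Eᶜ, birkM T u n x ∂μ = 0 := by
      apply setIntegral_eq_zero_of_forall_eq_zero
      intro x hx
      have h1 : ¬ (0 < birkM T u n x) := hx
      have h2 := birkM_nonneg T u n x
      linarith
    rw [this, add_zero]
  have step4 : ∫ x in E, birkM T u n (T x) ∂μ ≤ ∫ x, birkM T u n (T x) ∂μ :=
    setIntegral_le_integral hMTint (ae_of_all _ (fun x => birkM_nonneg T u n (T x)))
  have step5 : ∫ x, birkM T u n (T x) ∂μ = ∫ x, birkM T u n x ∂μ :=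
    integral_comp_eq hT (measurable_birkM hT.measurable hu n)
  linarith

/-- half of Birkhoff's theorem: a.e. upper bound for the limsup of ergodic averages -/
lemma halfBirkhoff (hT : Ergodic T μ) {u : α → ℝ} (hu : Measurable u) {M : ℝ}
    (hM0 : 0 ≤ M) (h0 : ∀ x, 0 ≤ u x) (hM : ∀ x, u x ≤ M) :
    ∀ᵐ x ∂μ, limsup (fun n => birkS T u n x / n) atTop ≤ ∫ x, u x ∂μ := by
  set A : ℕ → α → ℝ := fun n x => birkS T u n x / n with hA
  have hS0 : ∀ n x, 0 ≤ birkS T u n x :=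
    fun n x => Finset.sum_nonneg (fun i _ => h0 _)
  have hSle : ∀ n x, birkS T u n x ≤ n * M := by
    intro n x
    calc birkS T u n x ≤ ∑ _i ∈ Finset.range n, M := Finset.sum_le_sum (fun i _ => hM _)
      _ = n * M := by rw [Finset.sum_const, Finset.card_range, nsmul_eq_mul]
  have hA0 : ∀ n x, 0 ≤ A n x := fun n x => div_nonneg (hS0 n x) (Nat.cast_nonneg n)
  have hAM : ∀ n x, A n x ≤ M := by
    intro n x
    rcases Nat.eq_zero_or_pos n with rfl | hn
    · simp [hA, birkS_zero]; exact hM0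
    · rw [hA, div_le_iff₀ (by positivity)]
      calc birkS T u n x ≤ n * M := hSle n x
        _ = M * n := by ring
  set φ : α → ℝ := fun x => limsup (fun n => A n x) atTop with hφdef
  have hφm : Measurable φ :=
    Measurable.limsup (fun n => (measurable_birkS hT.toMeasurePreserving.measurable hu n).div_const _)
  have hφbd : ∀ x, 0 ≤ φ x ∧ φ x ≤ M := by
    intro x
    constructor
    · apply le_limsup_of_frequently_le
      · exact Frequently.of_forall (fun n => hA0 n x)
      · exact isBoundedUnder_of ⟨M, fun n => hAM n x⟩
    · apply limsup_le_of_le (isCoboundedUnder_le_of_le atTop (x := 0) (fun n => hA0 n x))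
      exact Eventually.of_forall (fun n => hAM n x)
  have hdtend : Tendsto (fun n : ℕ => M / n) atTop (nhds 0) :=
    tendsto_const_div_atTop_nhds_zero_nat M
  have hmono : ∀ x, φ x ≤ φ (T x) := by
    intro x
    have hshift : φ x = limsup (fun n => A (n+1) x) atTop :=
      (limsup_nat_add (fun n => A n x) 1).symm
    rw [hshift]
    apply limsup_le_limsup_perturb (A := M) (B := 0) (d := fun n : ℕ => M / n)
      (fun n => hA0 (n+1) x) (fun n => hAM n (T x)) ?_ hdtend
    filter_upwards [eventually_ge_atTop 1] with n hn
    have hn0 : (0:ℝ) < n := by exact_mod_cast hn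
    have hn1 : (0:ℝ) < (n:ℝ)+1 := by linarith
    have hsucc : birkS T u (n+1) x = u x + birkS T u n (T x) := birkS_succ T u n x
    have h1 : A (n+1) x = (u x + birkS T u n (T x)) / ((n:ℝ)+1) := by
      rw [hA]; push_cast; rw [hsucc]
    rw [h1]
    have h2 : (u x + birkS T u n (T x)) / ((n:ℝ)+1)
        ≤ M / ((n:ℝ)+1) + birkS T u n (T x) / ((n:ℝ)+1) := by
      rw [← add_div]
      gcongr
      exact hM x
    have h3 : birkS T u n (T x) / ((n:ℝ)+1) ≤ birkS T u n (T x) / n :=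
      div_le_div_of_nonneg_left (hS0 n (T x)) hn0 (by linarith)
    have h4 : M / ((n:ℝ)+1) ≤ M / n :=
      div_le_div_of_nonneg_left hM0 hn0 (by linarith)
    have : A n (T x) = birkS T u n (T x) / n := rfl
    rw [this]
    linarith
  obtain ⟨c, hc⟩ := ae_const_of_le_comp hT hφm hφbd hmono
  have huint : Integrable u μ := integrable_of_bdd hu (Cb := M)
    (fun x => abs_le.mpr ⟨by linarith [h0 x], hM x⟩)
  have hkey : ∀ ε : ℝ, 0 < ε → c ≤ (∫ x, u x ∂μ) + ε := by
    intro ε hε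
    set h : α → ℝ := fun x => u x - (c - ε) with hh
    have hhm : Measurable h := hu.sub measurable_const
    have hhbd : ∀ x, |h x| ≤ M + |c| + ε := by
      intro x
      have h1 : |u x| ≤ M := abs_le.mpr ⟨by linarith [h0 x], hM x⟩
      show |u x - (c - ε)| ≤ M + |c| + ε
      calc |u x - (c - ε)| ≤ |u x| + |c - ε| := abs_sub _ _
        _ ≤ M + (|c| + |ε|) := add_le_add h1 (abs_sub _ _)
        _ = M + |c| + ε := by rw [abs_of_pos hε]; ring
    have hhbd0 : (0:ℝ) ≤ M + |c| + ε := by positivity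
    set E : ℕ → Set α := fun n => {x | 0 < birkM T h n x} with hEdef
    have hEm : ∀ n, MeasurableSet (E n) :=
      fun n => measurableSet_lt measurable_const
        (measurable_birkM hT.toMeasurePreserving.measurable hhm n)
    have hEmono : Monotone E := by
      apply monotone_nat_of_le_succ
      intro n x hx
      have : 0 < birkM T h n x := hx
      exact lt_of_lt_of_le this (birkM_mono T h n x)
    have hint : Integrable h μ := integrable_of_bdd hhm hhbd
    have hcover : ∀ᵐ x ∂μ, x ∈ ⋃ n, E n := by
      filter_upwards [hc] with x hx
      have hφx : φ x = c := hx
      have hfreq : ∃ᶠ n in atTop, c - ε < A n x := by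
        apply frequently_lt_of_lt_limsup
        · exact isCoboundedUnder_le_of_le atTop (x := 0) (fun n => hA0 n x)
        · have hre : limsup (fun n => A n x) atTop = φ x := rfl
          rw [hre, hφx]; linarith
      obtain ⟨n, hn1, hnA⟩ := (hfreq.and_eventually (eventually_ge_atTop 1)).exists
      have hn0 : (0:ℝ) < n := by exact_mod_cast hnA
      have hSgt : (n:ℝ) * (c - ε) < birkS T u n x := by
        have : A n x = birkS T u n x / n := rfl
        rw [this] at hn1
        calc (n:ℝ) * (c - ε) < n * (birkS T u n x / n) := by
              apply mul_lt_mul_of_pos_left hn1 hn0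
          _ = birkS T u n x := by field_simp
      have hbirkh : birkS T h n x = birkS T u n x - n * (c - ε) := by
        show (∑ i ∈ Finset.range n, (u (T^[i] x) - (c - ε))) = birkS T u n x - n * (c - ε)
        rw [Finset.sum_sub_distrib, Finset.sum_const, Finset.card_range, nsmul_eq_mul, birkS]
      have hpos : 0 < birkS T h n x := by rw [hbirkh]; linarith
      have : 0 < birkM T h n x := lt_of_lt_of_le hpos (birkS_le_birkM T h (le_refl n) x)
      exact Set.mem_iUnion.mpr ⟨n, this⟩
    have hnull : μ ((⋃ n, E n)ᶜ) = 0 := by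
      exact ae_iff.mp hcover
    have htend : Tendsto (fun n => ∫ x in E n, h x ∂μ) atTop
        (nhds (∫ x in ⋃ n, E n, h x ∂μ)) :=
      tendsto_setIntegral_of_monotone hEm hEmono hint.integrableOn
    have hUeq : ∫ x in ⋃ n, E n, h x ∂μ = ∫ x, h x ∂μ := by
      rw [← integral_add_compl (MeasurableSet.iUnion hEm) hint]
      have : μ.restrict ((⋃ n, E n)ᶜ) = 0 := Measure.restrict_eq_zero.mpr hnull
      rw [this, integral_zero_measure, add_zero]
    have hge : 0 ≤ ∫ x in ⋃ n, E n, h x ∂μ :=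
      ge_of_tendsto htend (Eventually.of_forall
        (fun n => garsia hT.toMeasurePreserving hhm hhbd0 hhbd n))
    have hinth : ∫ x, h x ∂μ = (∫ x, u x ∂μ) - (c - ε) := by
      rw [hh]
      rw [integral_sub huint (integrable_const _)]
      simp [measure_univ]
    rw [hUeq, hinth] at hge
    linarith
  have hcle : c ≤ ∫ x, u x ∂μ := le_of_forall_pos_le_add hkey
  filter_upwards [hc] with x hx
  have : φ x = c := hx
  calc limsup (fun n => birkS T u n x / n) atTop = φ x := rfl
    _ = c := this
    _ ≤ ∫ x, u x ∂μ := hcle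

section Covering
variable {γ : Type*}

lemma birkS_succ_right (T : γ → γ) (u : γ → ℝ) (k : ℕ) (y : γ) :
    birkS T u (k+1) y = birkS T u k y + u (T^[k] y) := by
  rw [birkS, Finset.sum_range_succ, ← birkS]

lemma birkS_add (T : γ → γ) (u : γ → ℝ) (n m : ℕ) (x : γ) :
    birkS T u (n + m) x = birkS T u n x + birkS T u m (T^[n] x) := by
  induction m with
  | zero => rw [Nat.add_zero, birkS_zero, add_zero]
  | succ m ih =>
    have h1 : n + (m + 1) = (n + m) + 1 := by omega
    rw [h1, birkS_succ_right, ih, birkS_succ_right]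
    have h2 : T^[n + m] x = T^[m] (T^[n] x) := by
      rw [add_comm, Function.iterate_add_apply]
    rw [h2, add_assoc]

lemma F_le_lin {T : γ → γ} {F : ℕ → γ → ℝ} {C : ℝ} (hF0 : ∀ x, F 0 x = 0)
    (hF1 : ∀ x, F 1 x ≤ C) (hsub : ∀ k l x, F (k + l) x ≤ F k x + F l (T^[k] x)) :
    ∀ L (x : γ), F L x ≤ L * C := by
  intro L
  induction L with
  | zero => intro x; rw [hF0]; simp
  | succ L ihL =>
    intro x
    have h1 := hsub L 1 x
    have h2 := ihL x
    have h3 := hF1 (T^[L] x)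
    push_cast
    linarith

lemma covering {T : γ → γ} {F : ℕ → γ → ℝ} {C β : ℝ} (hC : 0 ≤ C) (hβ : 0 ≤ β)
    (hF0 : ∀ x, F 0 x = 0) (hF1 : ∀ x, F 1 x ≤ C)
    (hsub : ∀ k l x, F (k + l) x ≤ F k x + F l (T^[k] x))
    {G : Set γ} {N : ℕ} (hN : 1 ≤ N)
    (hG : ∀ y ∈ G, ∃ n, 1 ≤ n ∧ n ≤ N ∧ F n y ≤ n * β)
    {u : γ → ℝ} (hu0 : ∀ y ∈ G, u y = 0) (hu1 : ∀ y ∉ G, u y = 1)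
    (hunn : ∀ y, 0 ≤ u y) :
    ∀ L (x : γ), F L x ≤ β * L + C * birkS T u L x + C * N := by
  intro L
  induction L using Nat.strong_induction_on with
  | _ L ih =>
    intro x
    have hSnn : ∀ k (y : γ), 0 ≤ birkS T u k y :=
      fun k y => Finset.sum_nonneg (fun i _ => hunn _)
    by_cases hLN : L ≤ N
    · have h1 : F L x ≤ L * C := F_le_lin hF0 hF1 hsub L x
      have h2 : (L:ℝ) * C ≤ N * C := by
        apply mul_le_mul_of_nonneg_right _ hC
        exact_mod_cast hLN
      have h3 := hSnn L x
      have h4 : 0 ≤ β * L := by positivity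
      nlinarith
    · push_neg at hLN
      by_cases hxG : x ∈ G
      · obtain ⟨n, hn1, hnN, hFn⟩ := hG x hxG
        have hnL : n ≤ L := by omega
        have hdec : n + (L - n) = L := by omega
        have h1 : F L x ≤ F n x + F (L - n) (T^[n] x) := by
          have := hsub n (L - n) x
          rwa [hdec] at this
        have h2 := ih (L - n) (by omega) (T^[n] x)
        have h3 : birkS T u (L - n) (T^[n] x) ≤ birkS T u L x := by
          have hb := birkS_add T u n (L - n) x
          rw [hdec] at hb
          have := hSnn n x
          linarith
        have h3' : C * birkS T u (L - n) (T^[n] x) ≤ C * birkS T u L x :=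
          mul_le_mul_of_nonneg_left h3 hC
        have hcast : ((L - n : ℕ):ℝ) = (L:ℝ) - n := by
          push_cast [Nat.cast_sub hnL]; ring
        rw [hcast] at h2
        linarith
      · have hL1 : 1 ≤ L := by omega
        have hdec : 1 + (L - 1) = L := by omega
        have h1 : F L x ≤ F 1 x + F (L - 1) (T x) := by
          have := hsub 1 (L - 1) x
          rw [hdec] at this
          simpa using this
        have h2 := ih (L - 1) (by omega) (T x)
        have h3 : birkS T u L x = 1 + birkS T u (L - 1) (T x) := by
          have hb := birkS_succ T u (L - 1) x
          rw [show L - 1 + 1 = L from by omega] at hb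
          rw [hb, hu1 x hxG]
        have h5 : C * birkS T u L x = C + C * birkS T u (L - 1) (T x) := by
          rw [h3]; ring
        have hcast : ((L - 1 : ℕ):ℝ) = (L:ℝ) - 1 := by
          push_cast [Nat.cast_sub hL1]; ring
        rw [hcast] at h2
        have h6 := hF1 x
        nlinarith
end Covering

theorem kingman_bounded (hT : Ergodic T μ) (F : ℕ → α → ℝ) (hFm : ∀ k, Measurable (F k))
    {C : ℝ} (hC : 0 ≤ C) (hF0 : ∀ x, F 0 x = 0)
    (hFnn : ∀ k x, 0 ≤ F k x) (hFle : ∀ k x, F k x ≤ k * C)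
    (hsub : ∀ k l x, F (k + l) x ≤ F k x + F l (T^[k] x)) :
    ∃ Λ ∈ Set.Icc (0:ℝ) C, ∀ᵐ x ∂μ, Tendsto (fun k => F k x / k) atTop (nhds Λ) := by
  classical
  set A : ℕ → α → ℝ := fun k x => F k x / k with hA
  have hA0 : ∀ k x, 0 ≤ A k x := fun k x => div_nonneg (hFnn k x) (Nat.cast_nonneg k)
  have hAC : ∀ k x, A k x ≤ C := by
    intro k x
    rcases Nat.eq_zero_or_pos k with rfl | hk
    · have : A 0 x = 0 := by rw [hA]; simp
      rw [this]; exact hC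
    · have hk0 : (0:ℝ) < k := by exact_mod_cast hk
      have : A k x = F k x / k := rfl
      rw [this, div_le_iff₀ hk0]
      calc F k x ≤ k * C := hFle k x
        _ = C * k := by ring
  have hdC : Tendsto (fun n : ℕ => C / n) atTop (nhds 0) :=
    tendsto_const_div_atTop_nhds_zero_nat C
  have hF1C : ∀ x, F 1 x ≤ C := by
    intro x
    have := hFle 1 x
    simpa using this
  have hstep : ∀ x : α, ∀ᶠ k : ℕ in atTop, A (k+1) x ≤ A k (T x) + C / k := by
    intro x
    filter_upwards [eventually_ge_atTop 1] with k hk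
    have hk0 : (0:ℝ) < k := by exact_mod_cast hk
    have hk1 : (0:ℝ) < (k:ℝ) + 1 := by linarith
    have h1 : F (k+1) x ≤ F 1 x + F k (T x) := by
      have h := hsub 1 k x
      rw [add_comm 1 k] at h
      simpa using h
    have h2 : A (k+1) x = F (k+1) x / ((k:ℝ)+1) := by
      have h : A (k+1) x = F (k+1) x / ((k+1 : ℕ):ℝ) := rfl
      rw [h]; push_cast; ring_nf
    rw [h2]
    have h3 : F (k+1) x / ((k:ℝ)+1) ≤ (C + F k (T x)) / ((k:ℝ)+1) := by
      gcongr
      linarith [hF1C x]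
    have h4 : (C + F k (T x)) / ((k:ℝ)+1) = C / ((k:ℝ)+1) + F k (T x) / ((k:ℝ)+1) :=
      add_div _ _ _
    have h5 : F k (T x) / ((k:ℝ)+1) ≤ F k (T x) / k :=
      div_le_div_of_nonneg_left (hFnn k (T x)) hk0 (by linarith)
    have h6 : C / ((k:ℝ)+1) ≤ C / k :=
      div_le_div_of_nonneg_left hC hk0 (by linarith)
    have h7 : A k (T x) = F k (T x) / k := rfl
    rw [h7]
    linarith
  -- liminf and limsup functions
  set lf : α → ℝ := fun x => liminf (fun k => A k x) atTop with hlf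
  set gf : α → ℝ := fun x => limsup (fun k => A k x) atTop with hgf
  have hAm : ∀ k : ℕ, Measurable (fun x => A k x) := fun k => (hFm k).div_const _
  have hlfm : Measurable lf := Measurable.liminf hAm
  have hgfm : Measurable gf := Measurable.limsup hAm
  have hlfbd : ∀ x, 0 ≤ lf x ∧ lf x ≤ C := by
    intro x
    constructor
    · exact le_liminf_of_le (isCoboundedUnder_ge_of_le atTop (x := C) (fun n => hAC n x))
        (Eventually.of_forall (fun n => hA0 n x))
    · exact liminf_le_of_frequently_le (Frequently.of_forall (fun n => hAC n x))
        (isBoundedUnder_of ⟨0, fun n => hA0 n x⟩)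
  have hgfbd : ∀ x, 0 ≤ gf x ∧ gf x ≤ C := by
    intro x
    constructor
    · exact le_limsup_of_frequently_le (Frequently.of_forall (fun n => hA0 n x))
        (isBoundedUnder_of ⟨C, fun n => hAC n x⟩)
    · exact limsup_le_of_le (isCoboundedUnder_le_of_le atTop (x := 0) (fun n => hA0 n x))
        (Eventually.of_forall (fun n => hAC n x))
  have hlfmono : ∀ x, lf x ≤ lf (T x) := by
    intro x
    have h1 : lf x = liminf (fun k => A (k+1) x) atTop := (liminf_nat_add (fun k => A k x) 1).symm
    rw [h1]
    exact liminf_le_liminf_perturb (A := C) (B := 0) (fun n => hA0 (n+1) x)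
      (fun n => hAC n (T x)) (hstep x) hdC
  have hgfmono : ∀ x, gf x ≤ gf (T x) := by
    intro x
    have h1 : gf x = limsup (fun k => A (k+1) x) atTop := (limsup_nat_add (fun k => A k x) 1).symm
    rw [h1]
    exact limsup_le_limsup_perturb (A := C) (B := 0) (fun n => hA0 (n+1) x)
      (fun n => hAC n (T x)) (hstep x) hdC
  obtain ⟨lc, hlc⟩ := ae_const_of_le_comp hT hlfm hlfbd hlfmono
  obtain ⟨gc, hgc⟩ := ae_const_of_le_comp hT hgfm hgfbd hgfmono
  have hne : (ae μ).NeBot := by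
    refine MeasureTheory.ae_neBot.mpr ?_
    exact IsProbabilityMeasure.ne_zero μ
  obtain ⟨x₀, hx₀l, hx₀g⟩ := (hlc.and hgc).exists
  have hlc0 : 0 ≤ lc := by
    have := (hlfbd x₀).1
    rw [hx₀l] at this
    exact this
  have hlcC : lc ≤ C := by
    have := (hlfbd x₀).2
    rw [hx₀l] at this
    exact this
  have hlcgc : lc ≤ gc := by
    have h1 : lf x₀ ≤ gf x₀ :=
      liminf_le_limsup (isBoundedUnder_of ⟨C, fun n => hAC n x₀⟩)
        (isBoundedUnder_of ⟨0, fun n => hA0 n x₀⟩)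
    rw [hx₀l, hx₀g] at h1
    exact h1
  -- the hard direction: gc ≤ lc
  have hgclc : gc ≤ lc := by
    refine le_of_forall_pos_le_add (fun ε hε => ?_)
    set β : ℝ := lc + ε with hβdef
    have hβ0 : 0 ≤ β := by linarith
    set G : ℕ → Set α := fun N => {y | ∃ n, 1 ≤ n ∧ n ≤ N ∧ F n y ≤ n * β} with hGdef
    have hGmeas : ∀ N, MeasurableSet (G N) := by
      intro N
      have : G N = ⋃ (n : ℕ) (_ : 1 ≤ n ∧ n ≤ N), {y | F n y ≤ n * β} := by
        ext y
        simp only [hGdef, Set.mem_setOf_eq, Set.mem_iUnion]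
        constructor
        · rintro ⟨n, h1, h2, h3⟩; exact ⟨n, ⟨h1, h2⟩, h3⟩
        · rintro ⟨n, ⟨h1, h2⟩, h3⟩; exact ⟨n, h1, h2, h3⟩
      rw [this]
      exact MeasurableSet.iUnion (fun n => MeasurableSet.iUnion
        (fun _ => measurableSet_le (hFm n) measurable_const))
    have hGmono : Monotone G := by
      intro N M hNM y hy
      obtain ⟨n, h1, h2, h3⟩ := hy
      exact ⟨n, h1, le_trans h2 hNM, h3⟩
    set u : ℕ → α → ℝ := fun N => Set.indicator (G N)ᶜ (fun _ => (1:ℝ)) with hudef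
    have hum : ∀ N, Measurable (u N) := fun N =>
      measurable_const.indicator (hGmeas N).compl
    have hu0 : ∀ N, ∀ y ∈ G N, u N y = 0 := fun N y hy =>
      Set.indicator_of_notMem (by simpa using hy) _
    have hu1 : ∀ N, ∀ y ∉ G N, u N y = 1 := fun N y hy =>
      Set.indicator_of_mem (by simpa using hy) _
    have hunn : ∀ N y, 0 ≤ u N y := by
      intro N y
      by_cases hy : y ∈ G N
      · rw [hu0 N y hy]
      · rw [hu1 N y hy]; norm_num
    have hule : ∀ N y, u N y ≤ 1 := by
      intro N y
      by_cases hy : y ∈ G N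
      · rw [hu0 N y hy]; norm_num
      · rw [hu1 N y hy]
    have huint : ∀ N, ∫ x, u N x ∂μ = (μ ((G N)ᶜ)).toReal := by
      intro N
      rw [hudef]
      simp only []
      rw [integral_indicator_const (1:ℝ) (hGmeas N).compl]
      simp; rfl
    -- covering bound
    have hcov : ∀ N, 1 ≤ N → ∀ L (x : α), F L x ≤ β * L + C * birkS T (u N) L x + C * N := by
      intro N hN
      refine covering hC hβ0 hF0 hF1C hsub hN ?_ (hu0 N) (hu1 N) (hunn N)
      intro y hy
      exact hy
    -- half-Birkhoff for the indicators
    have hhb : ∀ N, ∀ᵐ x ∂μ,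
        limsup (fun L => birkS T (u N) L x / L) atTop ≤ ∫ x, u N x ∂μ :=
      fun N => halfBirkhoff hT (hum N) (by norm_num) (hunn N) (hule N)
    -- step: for every N ≥ 1, gc ≤ β + C * ∫ u N
    have hkey : ∀ N, 1 ≤ N → gc ≤ β + C * ∫ x, u N x ∂μ := by
      intro N hN
      obtain ⟨x, hxg, hxb⟩ := ((hgc.and (hhb N))).exists
      have hSnn : ∀ L, 0 ≤ birkS T (u N) L x :=
        fun L => Finset.sum_nonneg (fun i _ => hunn N _)
      have hSdivle : ∀ L : ℕ, birkS T (u N) L x / L ≤ 1 := by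
        intro L
        rcases Nat.eq_zero_or_pos L with rfl | hL
        · rw [birkS_zero]; norm_num
        · have hL0 : (0:ℝ) < L := by exact_mod_cast hL
          rw [div_le_one hL0]
          calc birkS T (u N) L x ≤ ∑ _i ∈ Finset.range L, 1 :=
                Finset.sum_le_sum (fun i _ => hule N _)
            _ = L := by simp
      refine le_of_forall_pos_le_add (fun δ hδ => ?_)
      set δ' : ℝ := δ / (C + 1) with hδ'def
      have hδ'0 : 0 < δ' := by positivity
      have hev1 : ∀ᶠ L : ℕ in atTop, birkS T (u N) L x / L < (∫ x, u N x ∂μ) + δ' := by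
        apply eventually_lt_of_limsup_lt
        · exact lt_of_le_of_lt hxb (by linarith)
        · exact isBoundedUnder_of ⟨1, fun L => hSdivle L⟩
      have hev2 : ∀ᶠ L : ℕ in atTop, (C * N) / (L:ℝ) < δ' := by
        have := tendsto_const_div_atTop_nhds_zero_nat (C * N)
        exact this.eventually (eventually_lt_nhds hδ'0)
      have hev : ∀ᶠ L : ℕ in atTop,
          A L x ≤ β + C * ((∫ x, u N x ∂μ) + δ') + δ' := by
        filter_upwards [hev1, hev2, eventually_ge_atTop 1] with L h1 h2 hL
        have hL0 : (0:ℝ) < L := by exact_mod_cast hL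
        have hFb := hcov N hN L x
        have hdiv : A L x ≤ β + C * (birkS T (u N) L x / L) + (C * N) / L := by
          have h3 : A L x = F L x / L := rfl
          rw [h3, div_le_iff₀ hL0]
          calc F L x ≤ β * L + C * birkS T (u N) L x + C * N := hFb
            _ = (β + C * (birkS T (u N) L x / L) + (C * N) / L) * L := by
                field_simp
        have h4 : C * (birkS T (u N) L x / L) ≤ C * ((∫ x, u N x ∂μ) + δ') :=
          mul_le_mul_of_nonneg_left h1.le hC
        linarith
      have : gf x ≤ β + C * ((∫ x, u N x ∂μ) + δ') + δ' :=
        limsup_le_of_le (isCoboundedUnder_le_of_le atTop (x := 0) (fun n => hA0 n x)) hev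
      rw [hxg] at this
      calc gc ≤ β + C * ((∫ x, u N x ∂μ) + δ') + δ' := this
        _ = β + C * ∫ x, u N x ∂μ + (C + 1) * δ' := by ring
        _ = β + C * ∫ x, u N x ∂μ + δ := by
            rw [hδ'def]
            field_simp
    -- the measures tend to zero
    have hInull : μ (⋂ N, (G N)ᶜ) = 0 := by
      have hae : ∀ᵐ x ∂μ, x ∉ ⋂ N, (G N)ᶜ := by
        filter_upwards [hlc] with x hx
        have hxl : lf x = lc := hx
        have hfreq : ∃ᶠ n in atTop, A n x < β := by
          apply frequently_lt_of_liminf_lt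
          · exact isCoboundedUnder_ge_of_le atTop (x := C) (fun n => hAC n x)
          · have : liminf (fun n => A n x) atTop = lf x := rfl
            rw [this, hxl]; linarith
        obtain ⟨n, hnA, hn1⟩ := (hfreq.and_eventually (eventually_ge_atTop 1)).exists
        have hn0 : (0:ℝ) < n := by exact_mod_cast hn1
        have hFnx : F n x ≤ n * β := by
          have h3 : A n x = F n x / n := rfl
          rw [h3, div_lt_iff₀ hn0] at hnA
          nlinarith
        intro hmem
        rw [Set.mem_iInter] at hmem
        exact (hmem n) ⟨n, hn1, le_refl n, hFnx⟩
      exact measure_eq_zero_iff_ae_notMem.mpr hae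
    have hmt : Tendsto (fun N => μ ((G N)ᶜ)) atTop (nhds 0) := by
      have h1 := tendsto_measure_iInter_atTop (μ := μ)
        (fun N => (hGmeas N).compl.nullMeasurableSet)
        (fun N M hNM => Set.compl_subset_compl.mpr (hGmono hNM))
        ⟨0, measure_ne_top μ _⟩
      rw [hInull] at h1
      exact h1
    have hmtr : Tendsto (fun N => (μ ((G N)ᶜ)).toReal) atTop (nhds 0) := by
      have h2 : Tendsto ENNReal.toReal (nhds (0 : ENNReal)) (nhds ((0 : ENNReal).toReal)) :=
        ENNReal.tendsto_toReal (by norm_num)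
      simpa [Function.comp_def] using h2.comp hmt
    have hlim : Tendsto (fun N => β + C * (μ ((G N)ᶜ)).toReal) atTop (nhds β) := by
      have := (hmtr.const_mul C).const_add β
      simpa using this
    have hfin : gc ≤ β :=
      ge_of_tendsto hlim (by
        filter_upwards [eventually_ge_atTop 1] with N hN
        have := hkey N hN
        rwa [huint N] at this)
    linarith [hfin]
  have hgceq : gc = lc := le_antisymm hgclc hlcgc
  refine ⟨lc, ⟨hlc0, hlcC⟩, ?_⟩
  filter_upwards [hlc, hgc] with x hxl hxg
  have h1 : liminf (fun k => A k x) atTop = lc := hxl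
  have h2 : limsup (fun k => A k x) atTop = lc := by
    have : limsup (fun k => A k x) atTop = gc := hxg
    rw [this, hgceq]
  exact tendsto_of_liminf_eq_limsup h1 h2
    (isBoundedUnder_of ⟨C, fun n => hAC n x⟩)
    (isBoundedUnder_of ⟨0, fun n => hA0 n x⟩)

/-- If the space-time shift `T` by `(2b, 2a)` is ergodic for `P`, then there is a constant
`I ∈ [0, log(1/min(p,q))]` such that for `P`-a.e. environment `ξ`,
`-(1/(2bk)) log q_{2bk}^0(ξ, 2ak) → I`. -/
theorem quenched_rate_exists (p : ℝ) (hp0 : 0 < p) (hp1 : p < 1)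
    (a : ℤ) (b : ℕ) (hb : 1 ≤ b) (ha : |a| ≤ (b : ℤ))
    (P : Measure (ℕ → ℤ → Bool)) [IsProbabilityMeasure P]
    (hErg : Ergodic (fun ξ (k : ℕ) (y : ℤ) => ξ (k + 2 * b) (y + 2 * a)) P) :
    ∃ I ∈ Set.Icc (0 : ℝ) (Real.log (1 / min p (1 - p))),
      ∀ᵐ ξ ∂P,
        Tendsto
          (fun k : ℕ =>
            -(1 / (2 * (b : ℝ) * k)) * Real.log (quenchedProb p ξ (2 * b * k) 0 (2 * a * k)))
          atTop (nhds I) := by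
  classical
  set m : ℝ := min p (1 - p) with hm
  have hm0 : 0 < m := lt_min hp0 (by linarith)
  have hm1 : m ≤ 1 := le_trans (min_le_left _ _) hp1.le
  have hlog0 : 0 ≤ Real.log (1 / m) := by
    apply Real.log_nonneg
    rw [le_div_iff₀ hm0]
    linarith
  set T : (ℕ → ℤ → Bool) → (ℕ → ℤ → Bool) :=
    fun ξ (k : ℕ) (y : ℤ) => ξ (k + 2 * b) (y + 2 * a) with hT
  have hiter : ∀ (j : ℕ) (ξ : ℕ → ℤ → Bool),
      T^[j] ξ = fun k y => ξ (k + 2 * b * j) (y + 2 * a * j) := by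
    intro j
    induction j with
    | zero => intro ξ; funext k y; simp
    | succ j ih =>
      intro ξ
      rw [Function.iterate_succ_apply, ih (T ξ)]
      funext k y
      rw [hT]
      simp only []
      have h1 : k + 2 * b * j + 2 * b = k + 2 * b * (j + 1) := by ring
      have h2 : y + 2 * a * (j:ℤ) + 2 * a = y + 2 * a * ((j:ℕ) + 1 : ℤ) := by push_cast; ring
      rw [h1, h2]
      norm_cast
  set F : ℕ → (ℕ → ℤ → Bool) → ℝ :=
    fun k ξ => -Real.log (quenchedProb p ξ (2 * b * k) 0 (2 * a * k)) with hF
  set C : ℝ := 2 * (b : ℝ) * Real.log (1 / m) with hCdef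
  have hC : 0 ≤ C := by positivity
  -- lower bound for the quenched probability
  have hQlow : ∀ (k : ℕ) (ξ : ℕ → ℤ → Bool),
      m ^ (2 * b * k) ≤ quenchedProb p ξ (2 * b * k) 0 (2 * a * k) := by
    intro k ξ
    have hab : 0 ≤ a + b := by
      have := (abs_le.mp ha).1
      linarith
    set u : ℕ := (a + b).toNat * k with hu
    have huk : u ≤ 2 * b * k := by
      apply Nat.mul_le_mul_right
      have h1 : ((a + b).toNat : ℤ) ≤ ((2 * b : ℕ) : ℤ) := by
        rw [Int.toNat_of_nonneg hab]
        push_cast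
        have := (abs_le.mp ha).2
        linarith
      exact_mod_cast h1
    have hend : 2 * (u : ℤ) - ((2 * b * k : ℕ) : ℤ) = 2 * a * (k : ℤ) := by
      rw [hu]
      push_cast [Int.toNat_of_nonneg hab]
      ring
    have := quenchedProb_lower hp0 hp1 ξ (2 * b * k) u huk
    rwa [hend] at this
  have hQpos : ∀ (k : ℕ) (ξ : ℕ → ℤ → Bool),
      0 < quenchedProb p ξ (2 * b * k) 0 (2 * a * k) :=
    fun k ξ => lt_of_lt_of_le (pow_pos hm0 _) (hQlow k ξ)
  have hQle1 : ∀ (k : ℕ) (ξ : ℕ → ℤ → Bool),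
      quenchedProb p ξ (2 * b * k) 0 (2 * a * k) ≤ 1 :=
    fun k ξ => quenchedProb_le_one hp0.le hp1.le ξ _ _ _
  have hFm : ∀ k, Measurable (F k) :=
    fun k => (Real.measurable_log.comp (measurable_quenchedProb p (2 * b * k) 0 (2 * a * k))).neg
  have hF0 : ∀ ξ, F 0 ξ = 0 := by
    intro ξ
    rw [hF]
    simp only [Nat.mul_zero, Nat.cast_zero, mul_zero]
    rw [quenchedProb_zero]
    simp
  have hFnn : ∀ (k : ℕ) (ξ : ℕ → ℤ → Bool), 0 ≤ F k ξ := by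
    intro k ξ
    rw [hF]
    simp only [le_neg, neg_zero]
    exact Real.log_nonpos (hQpos k ξ).le (hQle1 k ξ)
  have hFle : ∀ (k : ℕ) (ξ : ℕ → ℤ → Bool), F k ξ ≤ k * C := by
    intro k ξ
    rw [hF]
    simp only []
    have h1 : Real.log (m ^ (2 * b * k)) ≤
        Real.log (quenchedProb p ξ (2 * b * k) 0 (2 * a * k)) :=
      Real.log_le_log (pow_pos hm0 _) (hQlow k ξ)
    rw [Real.log_pow] at h1
    have h2 : Real.log (1 / m) = -Real.log m := by
      rw [one_div, Real.log_inv]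
    rw [hCdef, h2]
    have h3 : ((2 * b * k : ℕ) : ℝ) = 2 * (b:ℝ) * k := by push_cast; ring
    rw [h3] at h1
    nlinarith [h1]
  have hsub : ∀ (k l : ℕ) (ξ : ℕ → ℤ → Bool), F (k + l) ξ ≤ F k ξ + F l (T^[k] ξ) := by
    intro k l ξ
    set Q1 := quenchedProb p ξ (2 * b * k) 0 (2 * a * k) with hQ1
    set Q2 := quenchedProb p (T^[k] ξ) (2 * b * l) 0 (2 * a * l) with hQ2
    set Q12 := quenchedProb p ξ (2 * b * (k + l)) 0 (2 * a * ((k + l : ℕ) : ℤ)) with hQ12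
    have hconcat := quenchedProb_concat hp0.le hp1.le ξ (2 * b * k) (2 * b * l)
      0 (2 * a * (k : ℤ)) (2 * a * ((k + l : ℕ) : ℤ))
    have hshift := quenchedProb_shift_space p (fun j w => ξ (2 * b * k + j) w) (2 * b * l)
      (2 * a * (k : ℤ)) (2 * a * ((k + l : ℕ) : ℤ))
    have henv : (fun j w => (fun j w => ξ (2 * b * k + j) w) j (w + 2 * a * (k : ℤ)))
        = T^[k] ξ := by
      rw [hiter k ξ]
      funext j w
      simp only []
      congr 1
      omega
    have hend2 : 2 * a * ((k + l : ℕ) : ℤ) - 2 * a * (k : ℤ) = 2 * a * (l : ℤ) := by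
      push_cast; ring
    rw [henv, hend2] at hshift
    rw [hshift] at hconcat
    have hidx : 2 * b * k + 2 * b * l = 2 * b * (k + l) := by ring
    rw [hidx] at hconcat
    -- hconcat : Q1 * (Q p ξshift (2bl) (2ak) (2a(k+l))) ... careful direction
    have hprod : Q1 * Q2 ≤ Q12 := hconcat
    have hQ2pos : 0 < Q2 := hQpos l (T^[k] ξ)
    have hQ1pos : 0 < Q1 := hQpos k ξ
    have hQ12pos : 0 < Q12 := hQpos (k + l) ξ
    have hlog : Real.log (Q1 * Q2) ≤ Real.log Q12 :=
      Real.log_le_log (by positivity) hprod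
    rw [Real.log_mul hQ1pos.ne' hQ2pos.ne'] at hlog
    rw [hF]
    simp only []
    rw [← hQ1, ← hQ2, ← hQ12]
    linarith
  obtain ⟨Λ, ⟨hΛ0, hΛC⟩, hae⟩ := kingman_bounded hErg F hFm hC hF0 hFnn hFle hsub
  have hb0 : (0:ℝ) < 2 * (b:ℝ) := by
    have : (1:ℝ) ≤ (b:ℝ) := by exact_mod_cast hb
    linarith
  refine ⟨Λ / (2 * (b:ℝ)), ⟨div_nonneg hΛ0 hb0.le, ?_⟩, ?_⟩
  · rw [div_le_iff₀ hb0]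
    calc Λ ≤ C := hΛC
      _ = Real.log (1 / m) * (2 * (b:ℝ)) := by rw [hCdef]; ring
  · filter_upwards [hae] with ξ hξ
    have htend : Tendsto (fun k : ℕ => (F k ξ / k) * (1 / (2 * (b:ℝ)))) atTop
        (nhds (Λ * (1 / (2 * (b:ℝ))))) := hξ.mul_const _
    have heq : ∀ k : ℕ, (F k ξ / k) * (1 / (2 * (b:ℝ)))
        = -(1 / (2 * (b:ℝ) * k)) * Real.log (quenchedProb p ξ (2 * b * k) 0 (2 * a * k)) := by
      intro k
      rw [hF]
      simp only []
      rcases Nat.eq_zero_or_pos k with rfl | hk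
      · simp
      · have hk0 : (0:ℝ) < k := by exact_mod_cast hk
        have hsplit : 1 / (2 * (b:ℝ) * (k:ℝ)) = 1 / (k:ℝ) * (1 / (2 * (b:ℝ))) := by
          rw [one_div_mul_one_div]
          congr 1
          ring
        rw [hsplit]
        ring
    have heq2 : Λ * (1 / (2 * (b:ℝ))) = Λ / (2 * (b:ℝ)) := by ring
    rw [heq2] at htend
    exact htend.congr heq
end

section
/- Fix p ∈ (0,1), q = 1 − p, and a static environment η : ℤ → {0,1}. For every nearest-neighbor path ω = (ω_0, …, ω_n) in ℤ with ω_0 < ω_n, the path weights satisfy the reversal identity P^η(Θω) · Π_{i=ω_0}^{ω_n−1} r(i, i+1) = P^η(ω) · Π_{i=ω_0}^{ω_n−1} r(i+1, i), where Θω = (ω_n, …, ω_0) is the time-reversed path. -/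
open Finset

/-- `ω` is a nearest-neighbor path of length `n` in `ℤ` (only the first `n` steps matter). -/
def IsNNPath (n : ℕ) (ω : ℕ → ℤ) : Prop :=
  ∀ k < n, ω (k + 1) - ω k = 1 ∨ ω (k + 1) - ω k = -1

/-- The one-step transition probability in the static environment `η`:
`r(y, y+1) = p·η(y) + q·(1−η(y))` and `r(y, y−1) = q·η(y) + p·(1−η(y))`, `q = 1 − p`. -/
noncomputable def staticRate (p : ℝ) (η : ℤ → Bool) (y z : ℤ) : ℝ :=
  if z = y + 1 then (if η y then p else 1 - p) else (if η y then 1 - p else p)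

/-- The weight `P^η(ω) = Π_{k<n} r(ω_k, ω_{k+1})` of the path `(ω_0, …, ω_n)`. -/
noncomputable def pathWeight (p : ℝ) (η : ℤ → Bool) (n : ℕ) (ω : ℕ → ℤ) : ℝ :=
  ∏ k ∈ Finset.range n, staticRate p η (ω k) (ω (k + 1))

/- ### Auxiliary machinery -/

theorem ico_succ_singleton' (b : ℤ) : Finset.Ico b (b + 1) = {b} := by
  ext x; simp; omega

theorem prod_Ico_succ_top' (a b : ℤ) (f : ℤ → ℝ) (h : a ≤ b) :
    ∏ i ∈ Finset.Ico a (b + 1), f i = (∏ i ∈ Finset.Ico a b, f i) * f b := by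
  rw [← Finset.Ico_union_Ico_eq_Ico h (by linarith : b ≤ b + 1),
    Finset.prod_union (Finset.Ico_disjoint_Ico_consecutive a b (b + 1)),
    ico_succ_singleton', Finset.prod_singleton]

theorem prod_Ico_succ_bot' (a b : ℤ) (f : ℤ → ℝ) (h : a < b) :
    ∏ i ∈ Finset.Ico a b, f i = f a * ∏ i ∈ Finset.Ico (a + 1) b, f i := by
  rw [← Finset.Ico_union_Ico_eq_Ico (by linarith : a ≤ a + 1) h,
    Finset.prod_union (Finset.Ico_disjoint_Ico_consecutive a (a + 1) b),
    ico_succ_singleton', Finset.prod_singleton]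

/-- Product of up-rates over `[a, b)`. -/
noncomputable def upProd (p : ℝ) (η : ℤ → Bool) (a b : ℤ) : ℝ :=
  ∏ i ∈ Finset.Ico a b, staticRate p η i (i + 1)

/-- Product of down-rates over `[a, b)`. -/
noncomputable def dnProd (p : ℝ) (η : ℤ → Bool) (a b : ℤ) : ℝ :=
  ∏ i ∈ Finset.Ico a b, staticRate p η (i + 1) i

/-- Signed boundary product: up-rates if `a ≤ b`, down-rates otherwise. -/
noncomputable def cProd (p : ℝ) (η : ℤ → Bool) (a b : ℤ) : ℝ :=
  if a ≤ b then upProd p η a b else dnProd p η b a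

theorem staticRate_pos {p : ℝ} (hp0 : 0 < p) (hp1 : p < 1) (η : ℤ → Bool) (y z : ℤ) :
    0 < staticRate p η y z := by
  unfold staticRate; split_ifs <;> linarith

theorem cProd_pos {p : ℝ} (hp0 : 0 < p) (hp1 : p < 1) (η : ℤ → Bool) (a b : ℤ) :
    0 < cProd p η a b := by
  unfold cProd upProd dnProd
  split_ifs <;> exact Finset.prod_pos (fun i _ => staticRate_pos hp0 hp1 η _ _)

theorem cProd_of_le (p : ℝ) (η : ℤ → Bool) {a b : ℤ} (h : a ≤ b) :
    cProd p η a b = upProd p η a b := if_pos h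

theorem cProd_of_ge (p : ℝ) (η : ℤ → Bool) {a b : ℤ} (h : b ≤ a) :
    cProd p η a b = dnProd p η b a := by
  unfold cProd
  split_ifs with h'
  · have : a = b := le_antisymm h' h
    subst this
    simp [upProd, dnProd]
  · rfl

/-- Key single-step identity for `cProd`, upward version. -/
theorem star_up (p : ℝ) (η : ℤ → Bool) (a m : ℤ) :
    staticRate p η (m + 1) m * cProd p η m a * cProd p η a (m + 1)
      = staticRate p η m (m + 1) * cProd p η a m * cProd p η (m + 1) a := by
  rcases le_or_gt a m with h | h
  · rw [cProd_of_ge p η h, cProd_of_le p η (by linarith : a ≤ m + 1),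
      cProd_of_le p η h, cProd_of_ge p η (by linarith : a ≤ m + 1)]
    unfold upProd dnProd
    rw [prod_Ico_succ_top' a m _ h, prod_Ico_succ_top' a m _ h]
    ring
  · rw [cProd_of_le p η (by linarith : m ≤ a), cProd_of_ge p η (by linarith : m + 1 ≤ a),
      cProd_of_ge p η (by linarith : m ≤ a), cProd_of_le p η (by linarith : m + 1 ≤ a)]
    unfold upProd dnProd
    rw [prod_Ico_succ_bot' m a _ h, prod_Ico_succ_bot' m a _ h]
    ring

/-- Key single-step identity for `cProd`. -/
theorem star (p : ℝ) (η : ℤ → Bool) (a m b : ℤ) (hb : b = m + 1 ∨ b = m - 1) :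
    staticRate p η b m * cProd p η m a * cProd p η a b
      = staticRate p η m b * cProd p η a m * cProd p η b a := by
  rcases hb with hb | hb
  · subst hb; exact star_up p η a m
  · have hm : m = b + 1 := by omega
    subst hm
    have := star_up p η a b
    linarith [this]

/-- Main induction: reversal identity with the signed boundary product. -/
theorem key_reversal (p : ℝ) (hp0 : 0 < p) (hp1 : p < 1) (η : ℤ → Bool) :
    ∀ (n : ℕ) (ω : ℕ → ℤ), IsNNPath n ω →
      pathWeight p η n (fun k => ω (n - k)) * cProd p η (ω 0) (ω n)
        = pathWeight p η n ω * cProd p η (ω n) (ω 0) := by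
  intro n
  induction n with
  | zero => intro ω _; simp [pathWeight]
  | succ n ih =>
    intro ω hω
    have hω' : IsNNPath n ω := fun k hk => hω k (by omega)
    have ih' := ih ω hω'
    have hstep : ω (n + 1) = ω n + 1 ∨ ω (n + 1) = ω n - 1 := by
      rcases hω n (by omega) with h | h <;> omega
    have hW : pathWeight p η (n + 1) ω
        = pathWeight p η n ω * staticRate p η (ω n) (ω (n + 1)) :=
      Finset.prod_range_succ _ _
    have hR : pathWeight p η (n + 1) (fun k => ω (n + 1 - k))
        = staticRate p η (ω (n + 1)) (ω n) * pathWeight p η n (fun k => ω (n - k)) := by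
      unfold pathWeight
      rw [Finset.prod_range_succ']
      have h1 : ∀ k, n + 1 - (k + 1) = n - k := fun k => Nat.succ_sub_succ n k
      have h2 : ∀ k, n + 1 - (k + 1 + 1) = n - (k + 1) := fun k => Nat.succ_sub_succ n (k + 1)
      simp only [h1, h2, Nat.sub_zero, Nat.succ_sub_one]
      ring
    set a := ω 0
    set m := ω n
    set b := ω (n + 1)
    have hne : cProd p η a m ≠ 0 := ne_of_gt (cProd_pos hp0 hp1 η a m)
    apply mul_right_cancel₀ hne
    rw [hR, hW]
    calc staticRate p η b m * pathWeight p η n (fun k => ω (n - k)) * cProd p η a b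
          * cProd p η a m
        = staticRate p η b m
            * (pathWeight p η n (fun k => ω (n - k)) * cProd p η a m) * cProd p η a b := by ring
      _ = staticRate p η b m * (pathWeight p η n ω * cProd p η m a) * cProd p η a b := by
            rw [ih']
      _ = pathWeight p η n ω * (staticRate p η b m * cProd p η m a * cProd p η a b) := by ring
      _ = pathWeight p η n ω * (staticRate p η m b * cProd p η a m * cProd p η b a) := by
            rw [star p η a m b hstep]
      _ = pathWeight p η n ω * staticRate p η m b * cProd p η b a * cProd p η a m := by ring

/-- Reversal identity for path weights in a static environment:
`P^η(Θω) · Π_{i=ω_0}^{ω_n−1} r(i, i+1) = P^η(ω) · Π_{i=ω_0}^{ω_n−1} r(i+1, i)`. -/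
theorem pathWeight_reversal (p : ℝ) (hp0 : 0 < p) (hp1 : p < 1) (η : ℤ → Bool)
    (n : ℕ) (ω : ℕ → ℤ) (hω : IsNNPath n ω) (h : ω 0 < ω n) :
    pathWeight p η n (fun k => ω (n - k)) * ∏ i ∈ Finset.Ico (ω 0) (ω n), staticRate p η i (i + 1)
      = pathWeight p η n ω * ∏ i ∈ Finset.Ico (ω 0) (ω n), staticRate p η (i + 1) i := by
  have key := key_reversal p hp0 hp1 η n ω hω
  rw [cProd_of_le p η (le_of_lt h), cProd_of_ge p η (le_of_lt h)] at key
  exact key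
end

section
/- Let 0 < β < α and θ ≥ α − β. For t > 0 let P_t be the product measure on ℕ × ℕ of the Poisson distribution with mean αt and the Poisson distribution with mean βt. Then lim_{t→∞} (1/t) · log P_t( {(m, j) ∈ ℕ × ℕ : (m : ℝ) − (j : ℝ) ≥ θ·t} ) = −J(θ), where J(θ) = sup_{λ∈ℝ} [ θλ − α(e^λ − 1) − β(e^{−λ} − 1) ]. -/
open MeasureTheory Filter ProbabilityTheory
open scoped NNReal ENNReal Nat Topology

lemma poisson_singleton (r : ℝ≥0) (k : ℕ) :
    poissonMeasure r {k} = ENNReal.ofReal (poissonPMFReal r k) := by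
  rw [poissonMeasure_singleton]
  rfl

lemma poisson_hasSum (r : ℝ≥0) (c : ℝ) :
    HasSum (fun k : ℕ => Real.exp (c * k) * poissonPMFReal r k)
      (Real.exp ((r : ℝ) * (Real.exp c - 1))) := by
  have h := NormedSpace.expSeries_div_hasSum_exp ((r : ℝ) * Real.exp c)
  rw [← Real.exp_eq_exp_ℝ] at h
  have h2 := h.mul_left (Real.exp (-(r : ℝ)))
  have heq : (fun k : ℕ => Real.exp (-(r:ℝ)) * (((r:ℝ) * Real.exp c) ^ k / k !))
      = fun k : ℕ => Real.exp (c * k) * poissonPMFReal r k := by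
    funext k
    rw [poissonPMFReal, mul_pow, ← Real.exp_nat_mul]
    ring
  rw [heq] at h2
  have : Real.exp (-(r:ℝ)) * Real.exp ((r:ℝ) * Real.exp c)
      = Real.exp ((r : ℝ) * (Real.exp c - 1)) := by
    rw [← Real.exp_add]; ring_nf
  rwa [this] at h2

lemma poisson_lintegral_exp (r : ℝ≥0) (c : ℝ) :
    ∫⁻ k : ℕ, ENNReal.ofReal (Real.exp (c * k)) ∂(poissonMeasure r)
      = ENNReal.ofReal (Real.exp ((r : ℝ) * (Real.exp c - 1))) := by
  rw [lintegral_countable']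
  have : ∀ k : ℕ, ENNReal.ofReal (Real.exp (c * k)) * poissonMeasure r {k}
      = ENNReal.ofReal (Real.exp (c * k) * poissonPMFReal r k) := by
    intro k
    rw [poisson_singleton, ← ENNReal.ofReal_mul (Real.exp_nonneg _)]
  simp_rw [this]
  rw [← ENNReal.ofReal_tsum_of_nonneg (fun k => mul_nonneg (Real.exp_nonneg _) poissonPMFReal_nonneg) (poisson_hasSum r c).summable,
    (poisson_hasSum r c).tsum_eq]

lemma chernoff (r s : ℝ≥0) (c : ℝ) (hc : 0 ≤ c) (u : ℝ) :
    ((poissonMeasure r).prod (poissonMeasure s)) {q : ℕ × ℕ | u ≤ (q.1:ℝ) - (q.2:ℝ)}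
      ≤ ENNReal.ofReal
        (Real.exp (-(c*u) + (r:ℝ)*(Real.exp c - 1) + (s:ℝ)*(Real.exp (-c) - 1))) := by
  set S : Set (ℕ × ℕ) := {q : ℕ × ℕ | u ≤ (q.1:ℝ) - (q.2:ℝ)}
  have hmeas : ∀ T : Set (ℕ × ℕ), MeasurableSet T := fun T => (Set.to_countable T).measurableSet
  have key : ((poissonMeasure r).prod (poissonMeasure s)) S ≤ ∫⁻ q : ℕ × ℕ,
      (ENNReal.ofReal (Real.exp (c * q.1)) * ENNReal.ofReal (Real.exp (-c * q.2)))
        * ENNReal.ofReal (Real.exp (-(c*u))) ∂((poissonMeasure r).prod (poissonMeasure s)) := by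
    rw [← setLIntegral_one S]
    refine le_trans (setLIntegral_mono (measurable_of_countable _) ?_)
      (setLIntegral_le_lintegral _ _)
    intro q hq
    rw [← ENNReal.ofReal_mul (Real.exp_nonneg _), ← Real.exp_add,
      ← ENNReal.ofReal_mul (Real.exp_nonneg _), ← Real.exp_add]
    refine ENNReal.one_le_ofReal.mpr (Real.one_le_exp ?_)
    have : u ≤ (q.1:ℝ) - (q.2:ℝ) := hq
    nlinarith
  refine key.trans (le_of_eq ?_)
  rw [lintegral_mul_const _ (measurable_of_countable _),
    MeasureTheory.lintegral_prod_mul (f := fun m : ℕ => ENNReal.ofReal (Real.exp (c * m)))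
      (g := fun j : ℕ => ENNReal.ofReal (Real.exp (-c * j)))
      (measurable_of_countable _).aemeasurable (measurable_of_countable _).aemeasurable]
  have h1 := poisson_lintegral_exp r c
  have h2 : ∫⁻ k : ℕ, ENNReal.ofReal (Real.exp (-c * k)) ∂(poissonMeasure s)
      = ENNReal.ofReal (Real.exp ((s:ℝ) * (Real.exp (-c) - 1))) := by
    simpa using poisson_lintegral_exp s (-c)
  rw [h1, h2, ← ENNReal.ofReal_mul (Real.exp_nonneg _), ← Real.exp_add,
    ← ENNReal.ofReal_mul (Real.exp_nonneg _), ← Real.exp_add]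
  ring_nf

lemma factorial_upper : ∀ n : ℕ, 1 ≤ n → (n ! : ℝ) ≤ (n:ℝ)^(n+1) * Real.exp (1 - n) := by
  intro n
  induction n with
  | zero => intro h; omega
  | succ m ih =>
    intro _
    rcases Nat.eq_zero_or_pos m with hm | hm
    · subst hm; norm_num
    have hm0 : (0:ℝ) < m := by exact_mod_cast hm
    have hm1 : (0:ℝ) < (m:ℝ) + 1 := by positivity
    set u : ℝ := 1/((m:ℝ)+1) with hu_def
    have hu : 0 < u := by positivity
    have hexp : Real.exp u * (m:ℝ) ≤ (m:ℝ) + 1 := by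
      have h := Real.add_one_le_exp (-u)
      have h' : (-u + 1) * Real.exp u ≤ 1 := by
        have := Real.exp_pos u
        calc (-u + 1) * Real.exp u ≤ Real.exp (-u) * Real.exp u :=
              mul_le_mul_of_nonneg_right h (le_of_lt this)
          _ = 1 := by rw [← Real.exp_add]; simp
      have hmu : -u + 1 = (m:ℝ)/((m:ℝ)+1) := by rw [hu_def]; field_simp; ring
      rw [hmu] at h'
      have := mul_le_mul_of_nonneg_left h' (le_of_lt hm1)
      calc Real.exp u * (m:ℝ) = ((m:ℝ)+1) * ((m:ℝ)/((m:ℝ)+1) * Real.exp u) := by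
            field_simp
        _ ≤ ((m:ℝ)+1) * 1 := this
        _ = (m:ℝ) + 1 := by ring
    have hkey : Real.exp 1 * (m:ℝ)^(m+1) ≤ ((m:ℝ)+1)^(m+1) := by
      have h1 : Real.exp 1 = (Real.exp u)^(m+1) := by
        rw [← Real.exp_nat_mul]
        congr 1
        rw [hu_def]
        field_simp
        push_cast; ring
      have h2 : (Real.exp u * (m:ℝ))^(m+1) ≤ (((m:ℝ)+1))^(m+1) :=
        pow_le_pow_left₀ (by positivity) hexp _
      rw [mul_pow] at h2
      rw [h1]; exact h2
    have ihm := ih hm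
    have hcast : ((m+1 : ℕ) : ℝ) = (m:ℝ) + 1 := by push_cast; ring
    calc ((m+1)! : ℝ) = ((m:ℝ)+1) * (m ! : ℝ) := by
          rw [Nat.factorial_succ]; push_cast; ring
      _ ≤ ((m:ℝ)+1) * ((m:ℝ)^(m+1) * Real.exp (1 - m)) := by
          exact mul_le_mul_of_nonneg_left ihm (le_of_lt hm1)
      _ ≤ ((m:ℝ)+1)^(m+2) * Real.exp (1 - (m+1)) := by
          have he : Real.exp (1 - (m:ℝ)) = Real.exp 1 * Real.exp (1 - ((m:ℝ)+1)) := by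
            rw [← Real.exp_add]; ring_nf
          rw [he]
          have : ((m:ℝ)+1) * ((m:ℝ)^(m+1) * (Real.exp 1 * Real.exp (1 - ((m:ℝ)+1))))
              = ((m:ℝ)+1) * (Real.exp 1 * (m:ℝ)^(m+1)) * Real.exp (1 - ((m:ℝ)+1)) := by ring
          rw [this]
          have h3 : ((m:ℝ)+1) * (Real.exp 1 * (m:ℝ)^(m+1)) ≤ ((m:ℝ)+1) * ((m:ℝ)+1)^(m+1) :=
            mul_le_mul_of_nonneg_left hkey (le_of_lt hm1)
          have h4 : ((m:ℝ)+1) * ((m:ℝ)+1)^(m+1) = ((m:ℝ)+1)^(m+2) := by ring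
          calc ((m:ℝ)+1) * (Real.exp 1 * (m:ℝ)^(m+1)) * Real.exp (1 - ((m:ℝ)+1))
              ≤ ((m:ℝ)+1) * ((m:ℝ)+1)^(m+1) * Real.exp (1 - ((m:ℝ)+1)) :=
                mul_le_mul_of_nonneg_right h3 (Real.exp_nonneg _)
            _ = ((m:ℝ)+1)^(m+2) * Real.exp (1 - ((m:ℝ)+1)) := by rw [h4]
      _ = (((m+1:ℕ)):ℝ)^(m+1+1) * Real.exp (1 - ((m+1:ℕ):ℝ)) := by rw [hcast]

lemma log_factorial_le (n : ℕ) (hn : 1 ≤ n) :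
    Real.log (n !) ≤ (n:ℝ) * Real.log n - n + (1 + Real.log n) := by
  have h1 : (0:ℝ) < n ! := by exact_mod_cast Nat.factorial_pos n
  have hn0 : (0:ℝ) < n := by exact_mod_cast hn
  have := Real.log_le_log h1 (factorial_upper n hn)
  rw [Real.log_mul (by positivity) (Real.exp_ne_zero _), Real.log_pow, Real.log_exp] at this
  push_cast at this ⊢
  linarith

lemma le_log_factorial (n : ℕ) (hn : 1 ≤ n) :
    (n:ℝ) * Real.log n - n ≤ Real.log (n !) := by
  have h1 : (0:ℝ) < n ! := by exact_mod_cast Nat.factorial_pos n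
  have hn0 : (0:ℝ) < n := by exact_mod_cast hn
  have h := Real.pow_div_factorial_le_exp (x := (n:ℝ)) (Nat.cast_nonneg n) n
  have h2 : (n:ℝ)^n ≤ Real.exp n * n ! := by
    rw [div_le_iff₀ h1] at h
    linarith
  have := Real.log_le_log (by positivity) h2
  rw [Real.log_pow, Real.log_mul (Real.exp_ne_zero _) (ne_of_gt h1), Real.log_exp] at this
  linarith

lemma sup_eq_aux (α β θ x : ℝ) (hα : 0 < α) (hβ : 0 < β) (hx : 0 < x)
    (hroot : α * x - β / x = θ) :
    (⨆ l : ℝ, (θ * l - α * (Real.exp l - 1) - β * (Real.exp (-l) - 1)))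
      = θ * Real.log x - α * (x - 1) - β * (1/x - 1) := by
  set f : ℝ → ℝ := fun l => θ * l - α * (Real.exp l - 1) - β * (Real.exp (-l) - 1) with hf
  have hfx : f (Real.log x) = θ * Real.log x - α * (x - 1) - β * (1/x - 1) := by
    simp only [hf, Real.exp_log hx, Real.exp_neg, Real.exp_log hx]
    rw [inv_eq_one_div]
  have hbound : ∀ l, f l ≤ f (Real.log x) := by
    intro l
    obtain ⟨u, rfl⟩ : ∃ u, l = Real.log x + u := ⟨l - Real.log x, by ring⟩
    have hel : Real.exp (Real.log x + u) = x * Real.exp u := by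
      rw [Real.exp_add, Real.exp_log hx]
    have henl : Real.exp (-(Real.log x + u)) = Real.exp (-u) / x := by
      rw [show -(Real.log x + u) = -u + -Real.log x by ring, Real.exp_add,
        Real.exp_neg (Real.log x), Real.exp_log hx, div_eq_mul_inv]
    have e1 : 0 ≤ Real.exp u - 1 - u := by nlinarith [Real.add_one_le_exp u]
    have e2 : 0 ≤ Real.exp (-u) - 1 + u := by nlinarith [Real.add_one_le_exp (-u)]
    have t1 : 0 ≤ (α * x) * (Real.exp u - 1 - u) := mul_nonneg (by positivity) e1
    have t2 : 0 ≤ (β / x) * (Real.exp (-u) - 1 + u) := mul_nonneg (by positivity) e2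
    rw [hfx]
    simp only [hf, hel, henl]
    have hθ : θ = α * x - β / x := hroot.symm
    rw [hθ]
    have hxne : x ≠ 0 := ne_of_gt hx
    simp only [div_eq_mul_inv] at t2 ⊢
    nlinarith [t1, t2]
  refine le_antisymm (ciSup_le fun l => (hbound l).trans_eq hfx) ?_
  rw [← hfx]
  exact le_ciSup ⟨f (Real.log x), by rintro _ ⟨l, rfl⟩; exact hbound l⟩ (Real.log x)

set_option maxHeartbeats 1000000 in
/-- Annealed large deviation upper-tail rate for the homogeneous continuous-time walk
jumping `+1` at rate `α` and `−1` at rate `β`: for `θ ≥ α − β`,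
`(1/t) log P_t(m − j ≥ θt) → −J(θ)`, where `P_t` is the product of Poisson laws with
means `αt` and `βt` and `J(θ) = sup_λ [θλ − α(e^λ − 1) − β(e^{−λ} − 1)]`. -/
theorem poisson_pair_ldp_upper_tail (α β θ : ℝ) (hβ : 0 < β) (hαβ : β < α)
    (hθ : α - β ≤ θ) :
    Tendsto
      (fun t : ℝ =>
        (1 / t) *
          Real.log
            (((poissonMeasure (α * t).toNNReal).prod (poissonMeasure (β * t).toNNReal))
              {q : ℕ × ℕ | θ * t ≤ (q.1 : ℝ) - (q.2 : ℝ)}).toReal)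
      atTop
      (nhds (-(⨆ l : ℝ, (θ * l - α * (Real.exp l - 1) - β * (Real.exp (-l) - 1))))) := by
  have hα : 0 < α := hβ.trans hαβ
  have hθpos : 0 < θ := lt_of_lt_of_le (sub_pos.mpr hαβ) hθ
  set s0 := Real.sqrt (θ^2 + 4*α*β) with hs0_def
  have hs0nn : 0 ≤ s0 := Real.sqrt_nonneg _
  have hs0sq : s0^2 = θ^2 + 4*α*β := Real.sq_sqrt (by positivity)
  set x := (θ + s0)/(2*α) with hx_def
  have hxpos : 0 < x := div_pos (by linarith) (by linarith)
  have hxne : x ≠ 0 := ne_of_gt hxpos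
  have hroot : α * x - β / x = θ := by
    rw [hx_def]
    field_simp
    nlinarith [hs0sq]
  have hx1 : 1 ≤ x := by
    rw [hx_def, le_div_iff₀ (by linarith : (0:ℝ) < 2*α)]
    rcases le_or_gt (2*α - θ) 0 with h | h
    · linarith
    · have h2 : (2*α - θ)^2 ≤ s0^2 := by rw [hs0sq]; nlinarith
      nlinarith
  have hlx : 0 ≤ Real.log x := Real.log_nonneg hx1
  rw [sup_eq_aux α β θ x hα hβ hxpos hroot]
  set J := θ * Real.log x - α * (x - 1) - β * (1/x - 1) with hJ_def
  set b := β / x with hb_def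
  have hbpos : 0 < b := by rw [hb_def]; positivity
  have hab : α * x = b + θ := by rw [hb_def]; linarith
  set P : ℝ → ℝ≥0∞ := fun t =>
    ((poissonMeasure (α * t).toNNReal).prod (poissonMeasure (β * t).toNNReal))
      {q : ℕ × ℕ | θ * t ≤ (q.1 : ℝ) - (q.2 : ℝ)} with hP_def
  set jf : ℝ → ℕ := fun t => ⌊b*t⌋₊ with hjf
  set mf : ℝ → ℕ := fun t => ⌊b*t⌋₊ + ⌈θ*t⌉₊ with hmf
  have hcoeα : ∀ t : ℝ, 0 < t → (((α*t).toNNReal : ℝ)) = α*t :=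
    fun t ht => Real.coe_toNNReal _ (by positivity)
  have hcoeβ : ∀ t : ℝ, 0 < t → (((β*t).toNNReal : ℝ)) = β*t :=
    fun t ht => Real.coe_toNNReal _ (by positivity)
  -- Chernoff upper bound
  have hupper : ∀ t : ℝ, 0 < t → P t ≤ ENNReal.ofReal (Real.exp (t * (-J))) := by
    intro t ht
    refine (chernoff (α*t).toNNReal (β*t).toNNReal (Real.log x) hlx (θ*t)).trans (le_of_eq ?_)
    congr 1
    rw [hcoeα t ht, hcoeβ t ht, Real.exp_log hxpos, Real.exp_neg, Real.exp_log hxpos,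
      hJ_def, inv_eq_one_div]
    ring
  -- pointwise lower bound
  have hpoint : ∀ t : ℝ, 0 < t →
      ENNReal.ofReal (poissonPMFReal (α*t).toNNReal (mf t)
        * poissonPMFReal (β*t).toNNReal (jf t)) ≤ P t := by
    intro t ht
    have hmem : ((mf t, jf t) : ℕ × ℕ) ∈ {q : ℕ × ℕ | θ * t ≤ (q.1 : ℝ) - (q.2 : ℝ)} := by
      simp only [Set.mem_setOf_eq, hmf, hjf]
      push_cast
      have := Nat.le_ceil (θ*t)
      linarith
    have hsub : ({(mf t, jf t)} : Set (ℕ × ℕ)) ⊆ {q : ℕ × ℕ | θ * t ≤ (q.1 : ℝ) - (q.2 : ℝ)} :=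
      Set.singleton_subset_iff.mpr hmem
    have := measure_mono (μ := (poissonMeasure (α * t).toNNReal).prod
      (poissonMeasure (β * t).toNNReal)) hsub
    rw [← Set.singleton_prod_singleton, Measure.prod_prod, poisson_singleton,
      poisson_singleton, ← ENNReal.ofReal_mul poissonPMFReal_nonneg] at this
    exact this
  have hppos : ∀ t : ℝ, 0 < t → 0 < poissonPMFReal (α*t).toNNReal (mf t)
      * poissonPMFReal (β*t).toNNReal (jf t) := by
    intro t ht
    have h1 : (0:ℝ≥0) < (α*t).toNNReal := Real.toNNReal_pos.mpr (by positivity)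
    have h2 : (0:ℝ≥0) < (β*t).toNNReal := Real.toNNReal_pos.mpr (by positivity)
    exact mul_pos (poissonPMFReal_pos h1) (poissonPMFReal_pos h2)
  have htoRealpos : ∀ t : ℝ, 0 < t → 0 < (P t).toReal := by
    intro t ht
    refine ENNReal.toReal_pos (fun h0 => ?_) (measure_ne_top _ _)
    have := (hpoint t ht).trans_eq h0
    rw [le_zero_iff, ENNReal.ofReal_eq_zero] at this
    exact absurd this (not_le.mpr (hppos t ht))
  -- upper bound on L
  have hLle : ∀ᶠ t in atTop, (1/t) * Real.log (P t).toReal ≤ -J := by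
    filter_upwards [eventually_gt_atTop 0] with t ht
    have h1 : (P t).toReal ≤ Real.exp (t * (-J)) :=
      ENNReal.toReal_le_of_le_ofReal (Real.exp_nonneg _) (hupper t ht)
    have h2 : Real.log (P t).toReal ≤ t * (-J) := by
      have := Real.log_le_log (htoRealpos t ht) h1
      rwa [Real.log_exp] at this
    calc (1/t) * Real.log (P t).toReal ≤ (1/t) * (t * (-J)) := by
          apply mul_le_mul_of_nonneg_left h2 (by positivity)
      _ = -J := by field_simp
  
  -- positive pmf components
  set u : ℝ → ℝ := fun t => (mf t : ℝ)/t with hu_def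
  set v : ℝ → ℝ := fun t => (jf t : ℝ)/t with hv_def
  set g : ℝ → ℝ := fun t => -α - β + u t * Real.log (α / u t) + u t
      + v t * Real.log (β / v t) + v t
      - (2 + Real.log (mf t) + Real.log (jf t))/t with hg_def
  have hev : ∀ᶠ t in atTop, 0 < t ∧ 1 ≤ jf t ∧ 1 ≤ mf t := by
    filter_upwards [eventually_gt_atTop 0, eventually_ge_atTop (1/b)] with t ht ht2
    have hbt : (1:ℝ) ≤ b*t := by
      rw [one_div] at ht2
      calc (1:ℝ) = b * b⁻¹ := by field_simp
        _ ≤ b * t := mul_le_mul_of_nonneg_left ht2 hbpos.le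
    have hj1 : 1 ≤ jf t := Nat.le_floor (by exact_mod_cast hbt)
    exact ⟨ht, hj1, le_trans hj1 (Nat.le_add_right _ _)⟩
  -- lower bound : g ≤ L eventually
  have hgle : ∀ᶠ t in atTop, g t ≤ (1/t) * Real.log (P t).toReal := by
    filter_upwards [hev] with t ⟨ht, hj1, hm1⟩
    have hM : (1:ℝ) ≤ (mf t : ℝ) := by exact_mod_cast hm1
    have hJn : (1:ℝ) ≤ (jf t : ℝ) := by exact_mod_cast hj1
    have hM0 : (0:ℝ) < (mf t : ℝ) := lt_of_lt_of_le one_pos hM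
    have hJn0 : (0:ℝ) < (jf t : ℝ) := lt_of_lt_of_le one_pos hJn
    set p1 := poissonPMFReal (α*t).toNNReal (mf t) with hp1
    set p2 := poissonPMFReal (β*t).toNNReal (jf t) with hp2
    have hp1pos : 0 < p1 := poissonPMFReal_pos (Real.toNNReal_pos.mpr (by positivity))
    have hp2pos : 0 < p2 := poissonPMFReal_pos (Real.toNNReal_pos.mpr (by positivity))
    have step1 : p1 * p2 ≤ (P t).toReal := by
      have := ENNReal.toReal_mono (measure_ne_top _ _) (hpoint t ht)
      rwa [ENNReal.toReal_ofReal (by positivity)] at this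
    have step2 : Real.log p1 + Real.log p2 ≤ Real.log (P t).toReal := by
      rw [← Real.log_mul (ne_of_gt hp1pos) (ne_of_gt hp2pos)]
      exact Real.log_le_log (by positivity) step1
    have hlogfac : ∀ (r : ℝ) (k : ℕ), 0 < r → Real.log (poissonPMFReal r.toNNReal k)
        = -r + (k:ℝ) * Real.log r - Real.log (k !) := by
      intro r k hr
      have hrc : ((r.toNNReal : ℝ)) = r := Real.coe_toNNReal _ hr.le
      have hfac : ((k ! : ℕ):ℝ) ≠ 0 := by positivity
      rw [poissonPMFReal, hrc, Real.log_div (by positivity) hfac,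
        Real.log_mul (Real.exp_ne_zero _) (by positivity), Real.log_exp, Real.log_pow]
    have step3 : -(α*t) + (mf t : ℝ) * Real.log (α*t)
        - ((mf t : ℝ) * Real.log (mf t) - (mf t : ℝ) + (1 + Real.log (mf t)))
          ≤ Real.log p1 := by
      rw [hp1, hlogfac (α*t) (mf t) (by positivity)]
      have := log_factorial_le (mf t) hm1
      linarith
    have step4 : -(β*t) + (jf t : ℝ) * Real.log (β*t)
        - ((jf t : ℝ) * Real.log (jf t) - (jf t : ℝ) + (1 + Real.log (jf t)))
          ≤ Real.log p2 := by
      rw [hp2, hlogfac (β*t) (jf t) (by positivity)]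
      have := log_factorial_le (jf t) hj1
      linarith
    have e1 : Real.log (α / u t) = Real.log (α*t) - Real.log (mf t) := by
      rw [show α / u t = (α*t)/(mf t : ℝ) by rw [hu_def]; field_simp,
        Real.log_div (by positivity) (by positivity)]
    have e2 : Real.log (β / v t) = Real.log (β*t) - Real.log (jf t) := by
      rw [show β / v t = (β*t)/(jf t : ℝ) by rw [hv_def]; field_simp,
        Real.log_div (by positivity) (by positivity)]
    have hgt : g t = (1/t) * ((-(α*t) + (mf t : ℝ) * Real.log (α*t)
        - ((mf t : ℝ) * Real.log (mf t) - (mf t : ℝ) + (1 + Real.log (mf t))))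
      + (-(β*t) + (jf t : ℝ) * Real.log (β*t)
        - ((jf t : ℝ) * Real.log (jf t) - (jf t : ℝ) + (1 + Real.log (jf t))))) := by
      rw [hg_def]
      simp only [hg_def, e1, e2]
      simp only [hu_def, hv_def]
      field_simp
      ring
    rw [hgt]
    calc (1/t) * _ ≤ (1/t) * (Real.log p1 + Real.log p2) := by
          apply mul_le_mul_of_nonneg_left (by linarith) (by positivity)
      _ ≤ (1/t) * Real.log (P t).toReal := by
          apply mul_le_mul_of_nonneg_left step2 (by positivity)
  
  -- limit of g
  have hbt_top : Tendsto (fun t : ℝ => b*t) atTop atTop :=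
    Tendsto.const_mul_atTop hbpos tendsto_id
  have hθt_top : Tendsto (fun t : ℝ => θ*t) atTop atTop :=
    Tendsto.const_mul_atTop hθpos tendsto_id
  have hv_t : Tendsto v atTop (𝓝 b) := by
    have h3 := ((tendsto_nat_floor_div_atTop (R := ℝ)).comp hbt_top).mul_const b
    rw [one_mul] at h3
    refine Filter.Tendsto.congr' ?_ h3
    filter_upwards [eventually_gt_atTop 0] with t ht
    simp only [Function.comp_apply, hv_def, hjf]
    field_simp
  have hceil_t : Tendsto (fun t : ℝ => ((⌈θ*t⌉₊ : ℕ) : ℝ)/t) atTop (𝓝 θ) := by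
    have h3 := ((tendsto_nat_ceil_div_atTop (R := ℝ)).comp hθt_top).mul_const θ
    rw [one_mul] at h3
    refine Filter.Tendsto.congr' ?_ h3
    filter_upwards [eventually_gt_atTop 0] with t ht
    simp only [Function.comp_apply]
    field_simp
  have hu_t : Tendsto u atTop (𝓝 (b + θ)) := by
    refine Filter.Tendsto.congr' ?_ (hv_t.add hceil_t)
    filter_upwards [] with t
    simp only [hu_def, hv_def, hmf, hjf]
    push_cast
    rw [add_div]
  have habθ : (0:ℝ) < b + θ := by linarith
  have c1 : Tendsto (fun t => u t * Real.log (α / u t)) atTop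
      (𝓝 ((b+θ) * Real.log (α/(b+θ)))) :=
    hu_t.mul ((tendsto_const_nhds.div hu_t (ne_of_gt habθ)).log
      (ne_of_gt (by positivity)))
  have c2 : Tendsto (fun t => v t * Real.log (β / v t)) atTop
      (𝓝 (b * Real.log (β/b))) :=
    hv_t.mul ((tendsto_const_nhds.div hv_t (ne_of_gt hbpos)).log
      (ne_of_gt (by positivity)))
  have hlogt : Tendsto (fun t : ℝ => Real.log t / t) atTop (𝓝 0) :=
    Real.isLittleO_log_id_atTop.tendsto_div_nhds_zero
  have hlogm : Tendsto (fun t => Real.log (mf t) / t) atTop (𝓝 0) := by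
    have h1 : Tendsto (fun t => Real.log (u t) / t) atTop (𝓝 0) :=
      Tendsto.div_atTop (hu_t.log (ne_of_gt habθ)) tendsto_id
    have h3 := h1.add hlogt
    rw [add_zero] at h3
    refine Filter.Tendsto.congr' ?_ h3
    filter_upwards [hev] with t ⟨ht, hj1, hm1⟩
    have hM0 : (0:ℝ) < (mf t : ℝ) := by exact_mod_cast hm1
    have hut : u t * t = (mf t : ℝ) := by rw [hu_def]; field_simp
    have : Real.log (mf t) = Real.log (u t) + Real.log t := by
      rw [← hut, Real.log_mul (by positivity) (ne_of_gt ht)]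
    rw [this, add_div]
  have hlogj : Tendsto (fun t => Real.log (jf t) / t) atTop (𝓝 0) := by
    have h1 : Tendsto (fun t => Real.log (v t) / t) atTop (𝓝 0) :=
      Tendsto.div_atTop (hv_t.log (ne_of_gt hbpos)) tendsto_id
    have h3 := h1.add hlogt
    rw [add_zero] at h3
    refine Filter.Tendsto.congr' ?_ h3
    filter_upwards [hev] with t ⟨ht, hj1, hm1⟩
    have hJ0 : (0:ℝ) < (jf t : ℝ) := by exact_mod_cast hj1
    have hvt : v t * t = (jf t : ℝ) := by rw [hv_def]; field_simp
    have : Real.log (jf t) = Real.log (v t) + Real.log t := by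
      rw [← hvt, Real.log_mul (by positivity) (ne_of_gt ht)]
    rw [this, add_div]
  have h2t : Tendsto (fun t : ℝ => (2:ℝ) / t) atTop (𝓝 0) :=
    Tendsto.div_atTop tendsto_const_nhds tendsto_id
  have c3 : Tendsto (fun t => (2 + Real.log (mf t) + Real.log (jf t))/t) atTop (𝓝 0) := by
    have h3 := (h2t.add hlogm).add hlogj
    rw [add_zero, add_zero] at h3
    refine Filter.Tendsto.congr' ?_ h3
    filter_upwards [] with t
    rw [add_div, add_div]
  have hg_t : Tendsto g atTop
      (𝓝 (-α - β + (b+θ) * Real.log (α/(b+θ)) + (b+θ) + b * Real.log (β/b) + b - 0)) := by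
    rw [hg_def]
    exact (((((tendsto_const_nhds (x := -α - β)).add c1).add hu_t).add c2).add hv_t).sub c3
  have htv : -α - β + (b+θ) * Real.log (α/(b+θ)) + (b+θ) + b * Real.log (β/b) + b - 0 = -J := by
    have hθx : θ = α*x - β/x := by rw [hb_def] at hroot; linarith
    have e3 : α/(α*x) = 1/x := by
      rw [div_mul_eq_div_div, div_self (ne_of_gt hα)]
    have e4 : β/(β/x) = x := by
      rw [div_div_eq_mul_div, mul_comm, mul_div_assoc, div_self (ne_of_gt hβ), mul_one]
    rw [← hab, hb_def, e3, e4, one_div, Real.log_inv, hJ_def, hθx]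
    have hinv : α * x * -Real.log x + β / x * Real.log x
        = -((α*x - β/x) * Real.log x) := by ring
    field_simp
    ring
  rw [htv] at hg_t
  exact tendsto_of_tendsto_of_tendsto_of_le_of_le' hg_t tendsto_const_nhds hgle hLle
end
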